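/- arXiv:1809.00967 — 11 statements merged into one kernel-verified Lean document; each statement's English description precedes it below -/
import Mathlib

section
/- Let Z be a real Hilbert space and let (u_n) be a sequence in Z converging weakly to u ∈ Z. Then for every v ∈ Z with v ≠ u, one has liminf_{n→∞} ‖u_n − v‖ > liminf_{n→∞} ‖u_n − u‖. -/
open Filter Topology

/-- Weak convergence of a sequence in an inner product space. -/
def WeakConv {X : Type*} [NormedAddCommGroup X] [InnerProductSpace ℝ X]
    (u : ℕ → X) (l : X) : Prop :=
  ∀ v : X, Tendsto (fun n => (inner ℝ (u n) v : ℝ)) atTop (𝓝 (inner ℝ l v))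

/-- Opial's Lemma: if `u_n ⇀ u` weakly in a real Hilbert space, then for every `v ≠ u`,
`liminf ‖u_n - v‖ > liminf ‖u_n - u‖`. -/
theorem opial_lemma {Z : Type*} [NormedAddCommGroup Z] [InnerProductSpace ℝ Z]
    [CompleteSpace Z] (u : ℕ → Z) (ulim : Z) (hu : WeakConv u ulim)
    (v : Z) (hv : v ≠ ulim) :
    liminf (fun n => ‖u n - ulim‖) atTop < liminf (fun n => ‖u n - v‖) atTop := by
  unfold WeakConv at hu
  -- Step 1: boundedness via Banach–Steinhaus
  have hbdd : ∃ C, ∀ n, ‖u n‖ ≤ C := by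
    have hpt : ∀ x : Z, ∃ C, ∀ n, ‖(InnerProductSpace.toDualMap ℝ Z (u n)) x‖ ≤ C := by
      intro x
      obtain ⟨C, hC⟩ := (hu x).norm.bddAbove_range
      exact ⟨C, fun n => by
        simpa [InnerProductSpace.toDualMap_apply_apply] using hC (Set.mem_range_self n)⟩
    obtain ⟨C, hC⟩ := banach_steinhaus hpt
    exact ⟨C, fun n => by simpa using hC n⟩
  obtain ⟨C, hC⟩ := hbdd
  set a : ℕ → ℝ := fun n => ‖u n - ulim‖ with ha
  set b : ℕ → ℝ := fun n => ‖u n - v‖ with hb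
  have ha0 : ∀ n, 0 ≤ a n := fun n => norm_nonneg _
  have hb0 : ∀ n, 0 ≤ b n := fun n => norm_nonneg _
  have haU : ∀ n, a n ≤ C + ‖ulim‖ := fun n =>
    (norm_sub_le _ _).trans (by linarith [hC n])
  have hbU : ∀ n, b n ≤ C + ‖v‖ := fun n =>
    (norm_sub_le _ _).trans (by linarith [hC n])
  have haBle : IsBoundedUnder (· ≤ ·) atTop a := isBoundedUnder_of ⟨C + ‖ulim‖, haU⟩
  have haBge : IsBoundedUnder (· ≥ ·) atTop a := isBoundedUnder_of ⟨0, ha0⟩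
  have hbBle : IsBoundedUnder (· ≤ ·) atTop b := isBoundedUnder_of ⟨C + ‖v‖, hbU⟩
  have hbBge : IsBoundedUnder (· ≥ ·) atTop b := isBoundedUnder_of ⟨0, hb0⟩
  set L := liminf a atTop with hL
  have hL0 : 0 ≤ L := le_liminf_of_le haBle.isCoboundedUnder_ge (Eventually.of_forall ha0)
  set K := ‖ulim - v‖ ^ 2 with hK
  have hK0 : 0 < K := by
    rw [hK]
    exact pow_pos (norm_pos_iff.mpr (sub_ne_zero.mpr (Ne.symm hv))) 2
  -- key identity
  have hkey : ∀ n, b n ^ 2 = a n ^ 2 + 2 * (inner ℝ (u n - ulim) (ulim - v) : ℝ) + K := by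
    intro n
    have : u n - v = (u n - ulim) + (ulim - v) := by abel
    simp only [hb, this, norm_add_sq_real, ha, hK]
  -- the cross term tends to 0
  have hc : Tendsto (fun n => 2 * (inner ℝ (u n - ulim) (ulim - v) : ℝ)) atTop (𝓝 0) := by
    have h1 : Tendsto (fun n => 2 * ((inner ℝ (u n) (ulim - v) : ℝ) - (inner ℝ ulim (ulim - v) : ℝ)))
        atTop (𝓝 (2 * ((inner ℝ ulim (ulim - v) : ℝ) - (inner ℝ ulim (ulim - v) : ℝ)))) :=
      ((hu (ulim - v)).sub tendsto_const_nhds).const_mul 2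
    simpa [inner_sub_left, sub_self] using h1
  -- choose ε
  set ε := min 1 (K / (2 * (1 + 2 * L))) with hε
  have hεpos : 0 < ε := lt_min one_pos (by positivity)
  have hε1 : ε ≤ 1 := min_le_left _ _
  have hεK : ε * (1 + 2 * L) ≤ K / 2 := by
    have h : ε ≤ K / (2 * (1 + 2 * L)) := min_le_right _ _
    have hpos : (0:ℝ) < 1 + 2 * L := by linarith
    calc ε * (1 + 2 * L) ≤ K / (2 * (1 + 2 * L)) * (1 + 2 * L) :=
          mul_le_mul_of_nonneg_right h (by linarith)
    _ = K / 2 := by field_simp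
  have hεK2 : ε ≤ K / 2 := by nlinarith
  -- eventual bounds
  have hev1 : ∀ᶠ n in atTop, L - ε < a n := by
    have : L - ε < liminf a atTop := by rw [← hL]; linarith
    exact eventually_lt_of_lt_liminf this haBge
  have hev2 : ∀ᶠ n in atTop, -ε < 2 * (inner ℝ (u n - ulim) (ulim - v) : ℝ) := by
    have := hc.eventually (eventually_gt_nhds (show -ε < 0 by linarith))
    exact this
  -- δ
  obtain ⟨δ, hδ0, hδ⟩ : ∃ δ : ℝ, 0 < δ ∧ ∀ᶠ n in atTop, L ^ 2 + δ ≤ b n ^ 2 := by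
    by_cases hLε : ε ≤ L
    · refine ⟨K / 2, by positivity, ?_⟩
      filter_upwards [hev1, hev2] with n h1 h2
      have hae : a n ^ 2 ≥ (L - ε) ^ 2 := by nlinarith [ha0 n]
      rw [hkey n]; nlinarith
    · push_neg at hLε
      refine ⟨K / 2 - L ^ 2, by nlinarith, ?_⟩
      filter_upwards [hev2] with n h2
      rw [hkey n]; nlinarith [ha0 n, sq_nonneg (a n)]
  -- conclude
  have hsq : ∀ᶠ n in atTop, Real.sqrt (L ^ 2 + δ) ≤ b n := by
    filter_upwards [hδ] with n hn
    have := Real.sqrt_le_sqrt hn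
    rwa [Real.sqrt_sq (hb0 n)] at this
  have hlb : Real.sqrt (L ^ 2 + δ) ≤ liminf b atTop :=
    le_liminf_of_le hbBle.isCoboundedUnder_ge hsq
  have hgt : L < Real.sqrt (L ^ 2 + δ) := by
    nlinarith [Real.sq_sqrt (by positivity : (0:ℝ) ≤ L ^ 2 + δ),
      Real.sqrt_nonneg (L ^ 2 + δ)]
  exact lt_of_lt_of_le hgt hlb
end

section
/- Let T₁ and T₂ be maximal monotone operators on a real Hilbert space X. Suppose (z_{k,1}, v_{k,1}) ∈ T₁ and (z_{k,2}, v_{k,2}) ∈ T₂ for k = 1, 2, …, and that z_{k,1} − z_{k,2} → 0 strongly, v_{k,1} + v_{k,2} → 0 strongly, z_{k,1} ⇀ z weakly, and v_{k,1} ⇀ v weakly as k → ∞. Then (z, v) ∈ T₁ and (z, −v) ∈ T₂. -/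
open Filter Topology

/-- A set-valued operator `T` on `X` (identified with its graph) is monotone. -/
def IsMonotoneOp {X : Type*} [NormedAddCommGroup X] [InnerProductSpace ℝ X]
    (T : Set (X × X)) : Prop :=
  ∀ p ∈ T, ∀ q ∈ T, (0 : ℝ) ≤ inner ℝ (p.1 - q.1) (p.2 - q.2)

/-- `T` is maximal monotone: monotone and maximal w.r.t. inclusion among monotone operators. -/
def IsMaxMonotone {X : Type*} [NormedAddCommGroup X] [InnerProductSpace ℝ X]
    (T : Set (X × X)) : Prop :=
  IsMonotoneOp T ∧ ∀ S : Set (X × X), IsMonotoneOp S → T ⊆ S → S = T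

/-- The extended solution set `S_e(A,B) = {(z,w) : w ∈ B(z), -w ∈ A(z)}`. -/
def Se {X : Type*} [NormedAddCommGroup X] [InnerProductSpace ℝ X]
    (A B : Set (X × X)) : Set (X × X) :=
  {p | (p.1, p.2) ∈ B ∧ (p.1, -p.2) ∈ A}

/-- The sequences `(y n, a n, x n, b n)` (for `n ≥ 1`) are generated by the
Douglas–Rachford method with stepsize `lam` from initial points `x 0`, `b 0`:
`a n ∈ A (y n)`, `lam • a n + y n = x (n-1) - lam • b (n-1)`,
`b n ∈ B (x n)`, `lam • b n + x n = y n + lam • b (n-1)`. -/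
def IsDR {X : Type*} [NormedAddCommGroup X] [InnerProductSpace ℝ X]
    (A B : Set (X × X)) (lam : ℝ) (y a x b : ℕ → X) : Prop :=
  ∀ n, 1 ≤ n →
    (y n, a n) ∈ A ∧ lam • a n + y n = x (n - 1) - lam • b (n - 1) ∧
    (x n, b n) ∈ B ∧ lam • b n + x n = y n + lam • b (n - 1)

/-- If a point is monotonically related to every point of a maximal monotone
operator, it belongs to the operator. -/
lemma IsMaxMonotone.mem_of_forall {X : Type*} [NormedAddCommGroup X]
    [InnerProductSpace ℝ X] {T : Set (X × X)} (hT : IsMaxMonotone T) {p : X × X}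
    (h : ∀ q ∈ T, (0 : ℝ) ≤ inner ℝ (p.1 - q.1) (p.2 - q.2)) : p ∈ T := by
  have hswap : ∀ q ∈ T, (0 : ℝ) ≤ inner ℝ (q.1 - p.1) (q.2 - p.2) := by
    intro q hq
    have h2 := h q hq
    have : (inner ℝ (q.1 - p.1) (q.2 - p.2) : ℝ) = inner ℝ (p.1 - q.1) (p.2 - q.2) := by
      rw [← inner_neg_neg (𝕜 := ℝ)]; simp
    linarith
  have hmono : IsMonotoneOp (insert p T) := by
    intro a ha b hb
    rcases ha with rfl | ha <;> rcases hb with rfl | hb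
    · simp
    · exact h b hb
    · exact hswap a ha
    · exact hT.1 a ha b hb
  have heq := hT.2 _ hmono (Set.subset_insert p T)
  rw [← heq]; exact Set.mem_insert _ _

/-- For any point `p` there is a point of a maximal monotone operator to which
`p` is not strictly monotonically related. -/
lemma IsMaxMonotone.exists_nonpos {X : Type*} [NormedAddCommGroup X]
    [InnerProductSpace ℝ X] {T : Set (X × X)} (hT : IsMaxMonotone T) (p : X × X) :
    ∃ q ∈ T, (inner ℝ (p.1 - q.1) (p.2 - q.2) : ℝ) ≤ 0 := by
  by_contra h
  push_neg at h
  have hp : p ∈ T := hT.mem_of_forall (fun q hq => (h q hq).le)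
  have := h p hp
  simp at this

/-- A weakly convergent sequence is (norm) bounded. -/
lemma WeakConv.bounded {X : Type*} [NormedAddCommGroup X]
    [InnerProductSpace ℝ X] [CompleteSpace X] {u : ℕ → X} {l : X}
    (h : WeakConv u l) : ∃ C : ℝ, 0 ≤ C ∧ ∀ k, ‖u k‖ ≤ C := by
  obtain ⟨C, hC⟩ := banach_steinhaus (g := fun k => innerSL ℝ (u k)) (by
    intro w
    have hb : BddAbove (Set.range fun k => ‖(inner ℝ (u k) w : ℝ)‖) :=
      ((h w).norm).bddAbove_range
    obtain ⟨Cw, hCw⟩ := hb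
    exact ⟨Cw, fun k => hCw ⟨k, rfl⟩⟩)
  refine ⟨max C 0, le_max_right _ _, fun k => ?_⟩
  have : ‖u k‖ = ‖innerSL ℝ (u k)‖ := (innerSL_apply_norm ℝ (u k)).symm
  rw [this]
  exact (hC k).trans (le_max_left _ _)

/-- Bauschke's lemma: graphs of maximal monotone operators are closed under this
mixed weak/strong convergence. -/
theorem weak_strong_graph_closed {X : Type*} [NormedAddCommGroup X]
    [InnerProductSpace ℝ X] [CompleteSpace X]
    (T₁ T₂ : Set (X × X)) (hT₁ : IsMaxMonotone T₁) (hT₂ : IsMaxMonotone T₂)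
    (z₁ v₁ z₂ v₂ : ℕ → X)
    (hm₁ : ∀ k, (z₁ k, v₁ k) ∈ T₁) (hm₂ : ∀ k, (z₂ k, v₂ k) ∈ T₂)
    (hz : Tendsto (fun k => z₁ k - z₂ k) atTop (𝓝 0))
    (hv : Tendsto (fun k => v₁ k + v₂ k) atTop (𝓝 0))
    (z v : X) (hzw : WeakConv z₁ z) (hvw : WeakConv v₁ v) :
    (z, v) ∈ T₁ ∧ (z, -v) ∈ T₂ := by
  obtain ⟨C₁, hC₁0, hC₁⟩ := hzw.bounded
  obtain ⟨C₂, hC₂0, hC₂⟩ := hvw.bounded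
  have hεn : Tendsto (fun k => ‖z₁ k - z₂ k‖) atTop (𝓝 0) := by
    simpa using hz.norm
  have hδn : Tendsto (fun k => ‖v₁ k + v₂ k‖) atTop (𝓝 0) := by
    simpa using hv.norm
  -- ⟨z₁ₖ, v₁ₖ⟩ + ⟨z₂ₖ, v₂ₖ⟩ → 0
  have t1 : Tendsto (fun k => (inner ℝ (z₁ k) (v₁ k + v₂ k) : ℝ)) atTop (𝓝 0) := by
    apply squeeze_zero_norm (a := fun k => C₁ * ‖v₁ k + v₂ k‖)
    · intro k
      calc ‖(inner ℝ (z₁ k) (v₁ k + v₂ k) : ℝ)‖ ≤ ‖z₁ k‖ * ‖v₁ k + v₂ k‖ :=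
            norm_inner_le_norm _ _
        _ ≤ C₁ * ‖v₁ k + v₂ k‖ :=
            mul_le_mul_of_nonneg_right (hC₁ k) (norm_nonneg _)
    · simpa using hδn.const_mul C₁
  have t2 : Tendsto (fun k => (inner ℝ (z₁ k - z₂ k) (v₁ k) : ℝ)) atTop (𝓝 0) := by
    apply squeeze_zero_norm (a := fun k => ‖z₁ k - z₂ k‖ * C₂)
    · intro k
      calc ‖(inner ℝ (z₁ k - z₂ k) (v₁ k) : ℝ)‖ ≤ ‖z₁ k - z₂ k‖ * ‖v₁ k‖ :=
            norm_inner_le_norm _ _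
        _ ≤ ‖z₁ k - z₂ k‖ * C₂ :=
            mul_le_mul_of_nonneg_left (hC₂ k) (norm_nonneg _)
    · simpa using hεn.mul_const C₂
  have t3 : Tendsto (fun k => (inner ℝ (z₁ k - z₂ k) (v₁ k + v₂ k) : ℝ)) atTop (𝓝 0) := by
    have := hz.inner (𝕜 := ℝ) hv
    simpa using this
  have h0 : Tendsto (fun k => (inner ℝ (z₁ k) (v₁ k) + inner ℝ (z₂ k) (v₂ k) : ℝ))
      atTop (𝓝 0) := by
    have hcomb := (t1.add t2).sub t3
    have heq : (fun k => (inner ℝ (z₁ k) (v₁ k) + inner ℝ (z₂ k) (v₂ k) : ℝ)) =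
        fun k => (inner ℝ (z₁ k) (v₁ k + v₂ k) + inner ℝ (z₁ k - z₂ k) (v₁ k)
          - inner ℝ (z₁ k - z₂ k) (v₁ k + v₂ k) : ℝ) := by
      funext k
      simp only [inner_add_right, inner_sub_left, inner_add_left]
      ring
    rw [heq]
    simpa using hcomb
  -- key inequality
  have key : ∀ x y, (x, y) ∈ T₁ → ∀ x' y', (x', y') ∈ T₂ →
      (0 : ℝ) ≤ inner ℝ (z - x) (v - y) + inner ℝ (z - x') (-v - y') := by
    intro x y hxy x' y' hxy'
    -- weak limits of z₂, v₂ against fixed vectors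
    have hεy' : Tendsto (fun k => (inner ℝ (z₁ k - z₂ k) y' : ℝ)) atTop (𝓝 0) := by
      simpa using hz.inner (𝕜 := ℝ) (tendsto_const_nhds (x := y'))
    have hz2 : Tendsto (fun k => (inner ℝ (z₂ k) y' : ℝ)) atTop (𝓝 (inner ℝ z y')) := by
      have := (hzw y').sub hεy'
      have heq : (fun k => (inner ℝ (z₂ k) y' : ℝ)) =
          fun k => (inner ℝ (z₁ k) y' - inner ℝ (z₁ k - z₂ k) y' : ℝ) := by
        funext k; simp [inner_sub_left]
      rw [heq]; simpa using this
    have hδx' : Tendsto (fun k => (inner ℝ (v₁ k + v₂ k) x' : ℝ)) atTop (𝓝 0) := by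
      simpa using hv.inner (𝕜 := ℝ) (tendsto_const_nhds (x := x'))
    have hv2 : Tendsto (fun k => (inner ℝ (v₂ k) x' : ℝ))
        atTop (𝓝 (-inner ℝ v x')) := by
      have := hδx'.sub (hvw x')
      have heq : (fun k => (inner ℝ (v₂ k) x' : ℝ)) =
          fun k => (inner ℝ (v₁ k + v₂ k) x' - inner ℝ (v₁ k) x' : ℝ) := by
        funext k; simp [inner_add_left]
      rw [heq]; simpa using this
    -- the nonnegative sequence and its limit
    have hconv : Tendsto (fun k => (inner ℝ (z₁ k - x) (v₁ k - y)
        + inner ℝ (z₂ k - x') (v₂ k - y') : ℝ)) atTop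
        (𝓝 (inner ℝ (z - x) (v - y) + inner ℝ (z - x') (-v - y'))) := by
      have hcomb := ((((((h0.sub (hzw y)).sub (hvw x)).add
        (tendsto_const_nhds (x := (inner ℝ x y : ℝ)))).sub hz2).sub hv2).add
        (tendsto_const_nhds (x := (inner ℝ x' y' : ℝ))))
      have heq : (fun k => (inner ℝ (z₁ k - x) (v₁ k - y)
          + inner ℝ (z₂ k - x') (v₂ k - y') : ℝ)) =
          fun k => ((inner ℝ (z₁ k) (v₁ k) + inner ℝ (z₂ k) (v₂ k)) - inner ℝ (z₁ k) y
            - inner ℝ (v₁ k) x + inner ℝ x y - inner ℝ (z₂ k) y' - inner ℝ (v₂ k) x'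
            + inner ℝ x' y' : ℝ) := by
        funext k
        simp only [inner_sub_left, inner_sub_right,
          real_inner_comm (v₁ k) x, real_inner_comm (v₂ k) x']
        ring
      have hlim : ((0 : ℝ) - inner ℝ z y - inner ℝ v x + inner ℝ x y - inner ℝ z y'
          - (-inner ℝ v x') + inner ℝ x' y')
          = inner ℝ (z - x) (v - y) + inner ℝ (z - x') (-v - y') := by
        simp only [inner_sub_left, inner_sub_right, inner_neg_right,
          real_inner_comm v x, real_inner_comm v x']
        ring
      rw [heq, ← hlim]
      exact hcomb
    refine ge_of_tendsto' hconv (fun k => ?_)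
    have h1 := hT₁.1 (z₁ k, v₁ k) (hm₁ k) (x, y) hxy
    have h2 := hT₂.1 (z₂ k, v₂ k) (hm₂ k) (x', y') hxy'
    simp only at h1 h2
    linarith
  constructor
  · apply hT₁.mem_of_forall
    rintro ⟨x, y⟩ hxy
    obtain ⟨⟨x', y'⟩, hq, hle⟩ := hT₂.exists_nonpos (z, -v)
    have := key x y hxy x' y' hq
    simp only at hle ⊢
    linarith
  · apply hT₂.mem_of_forall
    rintro ⟨x', y'⟩ hxy'
    obtain ⟨⟨x, y⟩, hq, hle⟩ := hT₁.exists_nonpos (z, v)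
    have := key x y hq x' y' hxy'
    simp only at hle ⊢
    linarith
end

section
/- Let A, B be maximal monotone operators on a real Hilbert space X, let λ > 0, and let (y_n, a_n, x_n, b_n) be sequences generated by the Douglas–Rachford method from initial points x₀, b₀ ∈ X. If there exists z ∈ X with 0 ∈ A(z) + B(z), then ‖x_n − y_n‖ → 0 and ‖a_n + b_n‖ → 0 as n → ∞. -/
open Filter Topology

private lemma dr_key_ineq {X : Type*} [NormedAddCommGroup X] [InnerProductSpace ℝ X]
    (q g d e' : X)
    (h1 : 0 ≤ (inner ℝ (q - d) (g - e') : ℝ)) (h2 : 0 ≤ (inner ℝ q e' : ℝ))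
    (h3 : 0 ≤ (inner ℝ d g : ℝ)) :
    ‖d‖^2 + ‖g‖^2 + ‖q‖^2 + ‖e'‖^2 ≤ ‖q + g‖^2 + ‖e' + d‖^2 := by
  have e1 := norm_add_sq_real q g
  have e2 := norm_add_sq_real e' d
  have hx : (inner ℝ (q - d) (g - e') : ℝ)
      = inner ℝ q g - inner ℝ q e' - inner ℝ d g + inner ℝ d e' := by
    simp [inner_sub_left, inner_sub_right]; ring
  have hs : (inner ℝ e' d : ℝ) = inner ℝ d e' := real_inner_comm _ _
  nlinarith [h1, h2, h3]

private lemma sq_norm_tendsto {X : Type*} [NormedAddCommGroup X]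
    (u : ℕ → X) (h : Tendsto (fun n => ‖u n‖^2) atTop (𝓝 0)) :
    Tendsto (fun n => ‖u n‖) atTop (𝓝 0) := by
  have h' := (Real.continuous_sqrt.tendsto 0).comp h
  simp only [Function.comp, Real.sqrt_zero] at h'
  exact h'.congr fun n => Real.sqrt_sq (norm_nonneg _)

/-- If the monotone inclusion `0 ∈ A(z) + B(z)` has a solution, then in the
Douglas–Rachford method `‖x_n - y_n‖ → 0` and `‖a_n + b_n‖ → 0`. -/
theorem dr_item2 {X : Type*} [NormedAddCommGroup X] [InnerProductSpace ℝ X]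
    [CompleteSpace X] (A B : Set (X × X))
    (hA : IsMaxMonotone A) (hB : IsMaxMonotone B)
    (lam : ℝ) (hlam : 0 < lam) (y a x b : ℕ → X) (hDR : IsDR A B lam y a x b)
    (hsol : ∃ z u v : X, (z, u) ∈ A ∧ (z, v) ∈ B ∧ u + v = 0) :
    Tendsto (fun n => ‖x n - y n‖) atTop (𝓝 0) ∧
    Tendsto (fun n => ‖a n + b n‖) atTop (𝓝 0) := by
  obtain ⟨z, u, v, hzu, hzv, huv⟩ := hsol
  have hu : u = -v := eq_neg_of_add_eq_zero_left huv
  set ψ : ℕ → ℝ := fun n => ‖x n - z‖^2 + ‖lam • b n - lam • v‖^2 with hψ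
  have hkey : ∀ n : ℕ,
      ‖x (n+2) - y (n+2)‖^2 + ‖x (n+1) - x (n+2)‖^2 + ψ (n+2) ≤ ψ (n+1) := by
    intro n
    obtain ⟨hAy, heq1, hBx, heq2⟩ := hDR (n+2) (by omega)
    obtain ⟨_, _, hBx', _⟩ := hDR (n+1) (by omega)
    have hsub : (n+2) - 1 = n+1 := rfl
    rw [hsub] at heq1 heq2
    set q := x (n+2) - z with hq
    set g := x (n+1) - x (n+2) with hg
    set d := x (n+2) - y (n+2) with hd
    set e' := lam • b (n+2) - lam • v with he'
    have hqd : q - d = y (n+2) - z := by rw [hq, hd]; abel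
    have hge : g - e' = lam • (a (n+2) + v) := by
      rw [hg, he']; linear_combination (norm := module) -heq1 - heq2
    have hqg : q + g = x (n+1) - z := by rw [hq, hg]; abel
    have hed : e' + d = lam • b (n+1) - lam • v := by
      rw [he', hd]; linear_combination (norm := module) heq2
    have h1 : 0 ≤ (inner ℝ (q - d) (g - e') : ℝ) := by
      have hmA : (0:ℝ) ≤ inner ℝ (y (n+2) - z) (a (n+2) - u) := hA.1 _ hAy _ hzu
      rw [hu, sub_neg_eq_add] at hmA
      rw [hqd, hge, real_inner_smul_right]
      exact mul_nonneg hlam.le hmA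
    have h2 : 0 ≤ (inner ℝ q e' : ℝ) := by
      have hmB : (0:ℝ) ≤ inner ℝ (x (n+2) - z) (b (n+2) - v) := hB.1 _ hBx _ hzv
      have he2 : e' = lam • (b (n+2) - v) := by rw [he']; module
      rw [he2, real_inner_smul_right]
      exact mul_nonneg hlam.le hmB
    have h3 : 0 ≤ (inner ℝ d g : ℝ) := by
      have hmB : (0:ℝ) ≤ inner ℝ (x (n+2) - x (n+1)) (b (n+2) - b (n+1)) :=
        hB.1 _ hBx _ hBx'
      have hd2 : d = lam • (b (n+1) - b (n+2)) := by
        rw [hd]; linear_combination (norm := module) heq2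
      have hg2 : g = -(x (n+2) - x (n+1)) := by rw [hg]; abel
      have : (inner ℝ d g : ℝ)
          = lam * inner ℝ (x (n+2) - x (n+1)) (b (n+2) - b (n+1)) := by
        rw [hd2, hg2, real_inner_smul_left, inner_neg_right,
          show (b (n+1) - b (n+2)) = -(b (n+2) - b (n+1)) by abel,
          inner_neg_left, neg_neg, real_inner_comm]
      rw [this]
      exact mul_nonneg hlam.le hmB
    have hmain := dr_key_ineq q g d e' h1 h2 h3
    have hpsi1 : ψ (n+1) = ‖q + g‖^2 + ‖e' + d‖^2 := by rw [hqg, hed]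
    have hpsi2 : ψ (n+2) = ‖q‖^2 + ‖e'‖^2 := rfl
    rw [hpsi1, hpsi2]
    linarith
  set φ : ℕ → ℝ := fun n => ψ (n+1) with hφ
  have hanti : Antitone φ := antitone_nat_of_succ_le fun n => by
    have := hkey n
    nlinarith [sq_nonneg ‖x (n+2) - y (n+2)‖, sq_nonneg ‖x (n+1) - x (n+2)‖]
  have hbdd : BddBelow (Set.range φ) := ⟨0, by rintro _ ⟨n, rfl⟩; positivity⟩
  have hconv := tendsto_atTop_ciInf hanti hbdd
  have hshift : Tendsto (fun n => φ (n+1)) atTop (𝓝 (⨅ n, φ n)) :=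
    hconv.comp (tendsto_add_atTop_nat 1)
  have hdiff : Tendsto (fun n => φ n - φ (n+1)) atTop (𝓝 0) := by
    have := hconv.sub hshift; simpa using this
  have hterm : Tendsto
      (fun n => ‖x (n+2) - y (n+2)‖^2 + ‖x (n+1) - x (n+2)‖^2) atTop (𝓝 0) := by
    refine squeeze_zero (fun n => by positivity) (fun n => ?_) hdiff
    have := hkey n
    simp only [hφ]
    linarith
  have hterm1 : Tendsto (fun n => ‖x (n+2) - y (n+2)‖^2) atTop (𝓝 0) :=
    squeeze_zero (fun n => by positivity)
      (fun n => by have := sq_nonneg ‖x (n+1) - x (n+2)‖; linarith) hterm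
  have hterm2 : Tendsto (fun n => ‖x (n+1) - x (n+2)‖^2) atTop (𝓝 0) :=
    squeeze_zero (fun n => by positivity)
      (fun n => by have := sq_nonneg ‖x (n+2) - y (n+2)‖; linarith) hterm
  constructor
  · have := sq_norm_tendsto (fun n => x (n+2) - y (n+2)) hterm1
    exact (tendsto_add_atTop_iff_nat 2).1 this
  · have hx2 := sq_norm_tendsto (fun n => x (n+1) - x (n+2)) hterm2
    have heqab : ∀ n : ℕ, ‖a (n+2) + b (n+2)‖ = lam⁻¹ * ‖x (n+1) - x (n+2)‖ := by
      intro n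
      obtain ⟨_, heq1, _, heq2⟩ := hDR (n+2) (by omega)
      have hsub : (n+2) - 1 = n+1 := rfl
      rw [hsub] at heq1 heq2
      have h5 : lam • (a (n+2) + b (n+2)) = x (n+1) - x (n+2) := by
        linear_combination (norm := module) heq1 + heq2
      have h6 : a (n+2) + b (n+2) = lam⁻¹ • (x (n+1) - x (n+2)) := by
        rw [← h5, smul_smul, inv_mul_cancel₀ hlam.ne', one_smul]
      rw [h6, norm_smul, Real.norm_eq_abs, abs_of_pos (inv_pos.mpr hlam)]
    have hmul : Tendsto (fun n => lam⁻¹ * ‖x (n+1) - x (n+2)‖) atTop (𝓝 0) := by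
      have := hx2.const_mul lam⁻¹
      simpa using this
    have : Tendsto (fun n => ‖a (n+2) + b (n+2)‖) atTop (𝓝 0) :=
      hmul.congr fun n => (heqab n).symm
    exact (tendsto_add_atTop_iff_nat 2).1 this
end

section
/- Let A, B be maximal monotone operators on a real Hilbert space X, let λ > 0, and let (y_n, a_n, x_n, b_n) be sequences generated by the Douglas–Rachford method from initial points x₀, b₀ ∈ X. If there exists z ∈ X with 0 ∈ A(z) + B(z), then there exists (z*, w*) ∈ S_e(A,B) such that x_n ⇀ z* and b_n ⇀ w* weakly in X as n → ∞. -/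
open Filter Topology

section DRAux

variable {X : Type*} [NormedAddCommGroup X] [InnerProductSpace ℝ X]

/-- Error-term inner ℝ products vanish in the limit (first argument bounded). -/
lemma dr_tendsto_inner_err {f g : ℕ → X} {Cf : ℝ} (hf : ∀ k, ‖f k‖ ≤ Cf)
    (hg : Tendsto (fun k => ‖g k‖) atTop (𝓝 0)) :
    Tendsto (fun k => (inner ℝ (f k) (g k) : ℝ)) atTop (𝓝 0) := by
  apply squeeze_zero_norm (a := fun k => Cf * ‖g k‖)
  · intro k
    calc ‖(inner ℝ (f k) (g k) : ℝ)‖ ≤ ‖f k‖ * ‖g k‖ := abs_real_inner_le_norm _ _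
      _ ≤ Cf * ‖g k‖ := mul_le_mul_of_nonneg_right (hf k) (norm_nonneg _)
  · simpa using hg.const_mul Cf

/-- Error-term inner ℝ products vanish in the limit (second argument bounded). -/
lemma dr_tendsto_inner_err' {f g : ℕ → X} {Cg : ℝ} (hg : ∀ k, ‖g k‖ ≤ Cg)
    (hf : Tendsto (fun k => ‖f k‖) atTop (𝓝 0)) :
    Tendsto (fun k => (inner ℝ (f k) (g k) : ℝ)) atTop (𝓝 0) := by
  apply squeeze_zero_norm (a := fun k => Cg * ‖f k‖)
  · intro k
    calc ‖(inner ℝ (f k) (g k) : ℝ)‖ ≤ ‖f k‖ * ‖g k‖ := abs_real_inner_le_norm _ _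
      _ ≤ ‖f k‖ * Cg := mul_le_mul_of_nonneg_left (hg k) (norm_nonneg _)
      _ = Cg * ‖f k‖ := mul_comm _ _
  · simpa using hf.const_mul Cg

/-- The fundamental algebraic identity behind the Fejér monotonicity of
Douglas–Rachford iterations. -/
lemma dr_key_identity (lam : ℝ) (p q r s : X) :
    ‖p‖^2 + lam^2 * ‖q‖^2 + ‖r - p - lam • (q - s)‖^2 + 2*lam*(inner ℝ p q : ℝ)
      + 2*(inner ℝ (p + lam • (q - s)) (r - p - lam • q) : ℝ)
      = ‖r‖^2 + lam^2 * ‖s‖^2 := by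
  rw [← real_inner_self_eq_norm_sq p, ← real_inner_self_eq_norm_sq q,
    ← real_inner_self_eq_norm_sq r, ← real_inner_self_eq_norm_sq s,
    ← real_inner_self_eq_norm_sq (r - p - lam • (q - s))]
  simp only [inner_sub_left, inner_sub_right, inner_add_left, inner_add_right,
    real_inner_smul_left, real_inner_smul_right, smul_sub]
  simp only [real_inner_comm q p, real_inner_comm r p, real_inner_comm s p,
    real_inner_comm r q, real_inner_comm s q, real_inner_comm s r]
  ring

/-- A maximal monotone operator contains any monotonically related pair. -/
lemma mem_of_isMaxMonotone {T : Set (X × X)} (hT : IsMaxMonotone T)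
    (p : X × X) (hp : ∀ q ∈ T, (0:ℝ) ≤ inner ℝ (p.1 - q.1) (p.2 - q.2)) : p ∈ T := by
  have hmono : IsMonotoneOp (insert p T) := by
    rintro p' (rfl | hp') q' (rfl | hq')
    · simp
    · exact hp q' hq'
    · have := hp p' hp'
      have hflip : (inner ℝ (p'.1 - q'.1) (p'.2 - q'.2) : ℝ)
          = inner ℝ (q'.1 - p'.1) (q'.2 - p'.2) := by
        rw [← neg_sub q'.1 p'.1, ← neg_sub q'.2 p'.2, inner_neg_neg]
      rw [hflip]; exact this
    · exact hT.1 p' hp' q' hq'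
  have := hT.2 _ hmono (Set.subset_insert _ _)
  rw [← this]; exact Set.mem_insert _ _

/-- Bounded sequences in a real Hilbert space have weakly convergent subsequences. -/
lemma exists_weak_subseq [CompleteSpace X] (u : ℕ → X) (C : ℝ) (hC : 0 ≤ C)
    (hu : ∀ n, ‖u n‖ ≤ C) :
    ∃ (σ : ℕ → ℕ) (l : X), StrictMono σ ∧
      ∀ v : X, Tendsto (fun k => (inner ℝ (u (σ k)) v : ℝ)) atTop (𝓝 (inner ℝ l v)) := by
  classical
  set F : ℕ → ℕ → ℝ := fun n m => inner ℝ (u n) (u m) with hF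
  have hFs : ∀ n, F n ∈ Set.univ.pi (fun _ : ℕ => Set.Icc (-(C*C)) (C*C)) := by
    intro n m _
    have h1 : |(inner ℝ (u n) (u m) : ℝ)| ≤ ‖u n‖ * ‖u m‖ := abs_real_inner_le_norm _ _
    have h2 : ‖u n‖ * ‖u m‖ ≤ C * C :=
      mul_le_mul (hu n) (hu m) (norm_nonneg _) hC
    have := abs_le.1 (h1.trans h2)
    exact ⟨this.1, this.2⟩
  obtain ⟨g, -, σ, hσ, hconv⟩ :=
    (isCompact_univ_pi (fun _ : ℕ => isCompact_Icc)).isSeqCompact hFs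
  have hcoord : ∀ m, Tendsto (fun k => (inner ℝ (u (σ k)) (u m) : ℝ)) atTop (𝓝 (g m)) := by
    intro m
    exact (tendsto_pi_nhds.1 hconv) m
  set K : Submodule ℝ X := (Submodule.span ℝ (Set.range u)).topologicalClosure with hK
  haveI : CompleteSpace K := (Submodule.isClosed_topologicalClosure _).completeSpace_coe
  have huK : ∀ n, u n ∈ K :=
    fun n => Submodule.le_topologicalClosure _ (Submodule.subset_span (Set.mem_range_self n))
  have hspan : ∀ w ∈ Submodule.span ℝ (Set.range u),
      ∃ r : ℝ, Tendsto (fun k => (inner ℝ (u (σ k)) w : ℝ)) atTop (𝓝 r) := by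
    intro w hw
    induction hw using Submodule.span_induction with
    | mem w hw => obtain ⟨m, rfl⟩ := hw; exact ⟨g m, hcoord m⟩
    | zero => exact ⟨0, by simp⟩
    | add w₁ w₂ h₁ h₂ ih₁ ih₂ =>
        obtain ⟨r₁, hr₁⟩ := ih₁; obtain ⟨r₂, hr₂⟩ := ih₂
        exact ⟨r₁ + r₂, by simpa [inner_add_right] using hr₁.add hr₂⟩
    | smul c w hw ih =>
        obtain ⟨r, hr⟩ := ih
        exact ⟨c * r, by simpa [real_inner_smul_right] using hr.const_mul c⟩
  have hall : ∀ v : X, ∃ r : ℝ, Tendsto (fun k => (inner ℝ (u (σ k)) v : ℝ)) atTop (𝓝 r) := by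
    intro v
    set vK : X := (Submodule.orthogonalProjectionOnto K v : X) with hvK
    have heq : ∀ n, (inner ℝ (u n) v : ℝ) = inner ℝ (u n) vK := by
      intro n
      have h0 : (inner ℝ (u n) (v - vK) : ℝ) =
          0 := (Submodule.mem_orthogonal K _).1 (Submodule.sub_starProjection_mem_orthogonal (K := K) v)
          (u n) (huK n)
      have := inner_sub_right (𝕜 := ℝ) (u n) v vK
      rw [h0] at this
      linarith
    have hmem : vK ∈ closure ((Submodule.span ℝ (Set.range u) : Submodule ℝ X) : Set X) := by
      have : vK ∈ K := SetLike.coe_mem _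
      rw [← Submodule.topologicalClosure_coe]
      exact this
    have hcauchy : CauchySeq (fun k => (inner ℝ (u (σ k)) vK : ℝ)) := by
      rw [Metric.cauchySeq_iff]
      intro ε hε
      have hC1 : (0:ℝ) < C + 1 := by linarith
      obtain ⟨w, hwmem, hwd⟩ := Metric.mem_closure_iff.1 hmem (ε / (3 * (C + 1)))
        (by positivity)
      obtain ⟨r, hr⟩ := hspan w hwmem
      have hrc : CauchySeq (fun k => (inner ℝ (u (σ k)) w : ℝ)) := hr.cauchySeq
      obtain ⟨N, hN⟩ := Metric.cauchySeq_iff.1 hrc (ε / 3) (by positivity)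
      refine ⟨N, fun j hj i hi => ?_⟩
      have hbd : ∀ k, |(inner ℝ (u (σ k)) vK : ℝ) - inner ℝ (u (σ k)) w| ≤ C * ‖vK - w‖ := by
        intro k
        rw [← inner_sub_right]
        exact (abs_real_inner_le_norm _ _).trans
          (mul_le_mul_of_nonneg_right (hu _) (norm_nonneg _))
      have hvw : ‖vK - w‖ < ε / (3 * (C + 1)) := by
        rw [← dist_eq_norm]; exact hwd
      have hsmall : ∀ k, |(inner ℝ (u (σ k)) vK : ℝ) - inner ℝ (u (σ k)) w| ≤ ε / 3 := by
        intro k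
        refine (hbd k).trans ?_
        have : C * ‖vK - w‖ ≤ C * (ε / (3 * (C + 1))) :=
          mul_le_mul_of_nonneg_left hvw.le hC
        refine this.trans ?_
        have he : C * (ε / (3 * (C + 1))) = ε / 3 * (C / (C + 1)) := by
          field_simp
        have h1 : C / (C + 1) ≤ 1 := by
          rw [div_le_one hC1]; linarith
        rw [he]
        nlinarith [hε.le]
      have h1 := hsmall j
      have h2 := hsmall i
      have h3 := hN j hj i hi
      rw [Real.dist_eq] at h3 ⊢
      have : (inner ℝ (u (σ j)) vK : ℝ) - inner ℝ (u (σ i)) vK =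
          ((inner ℝ (u (σ j)) vK : ℝ) - inner ℝ (u (σ j)) w) +
          ((inner ℝ (u (σ j)) w : ℝ) - inner ℝ (u (σ i)) w) +
          ((inner ℝ (u (σ i)) w : ℝ) - inner ℝ (u (σ i)) vK) := by ring
      rw [this]
      calc _ ≤ |(inner ℝ (u (σ j)) vK : ℝ) - inner ℝ (u (σ j)) w| +
            |(inner ℝ (u (σ j)) w : ℝ) - inner ℝ (u (σ i)) w| +
            |(inner ℝ (u (σ i)) w : ℝ) - inner ℝ (u (σ i)) vK| := by
              exact (abs_add_three _ _ _)
        _ < ε := by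
              rw [abs_sub_comm (inner ℝ (u (σ i)) w : ℝ)] at *
              linarith [abs_sub_comm (inner ℝ (u (σ i)) vK : ℝ) (inner ℝ (u (σ i)) w : ℝ)]
    obtain ⟨r, hr⟩ := cauchySeq_tendsto_of_complete hcauchy
    exact ⟨r, by simpa only [heq] using hr⟩
  choose gl hgl using hall
  have hadd : ∀ v₁ v₂, gl (v₁ + v₂) = gl v₁ + gl v₂ := by
    intro v₁ v₂
    refine tendsto_nhds_unique (hgl (v₁ + v₂)) ?_
    simpa [inner_add_right] using (hgl v₁).add (hgl v₂)
  have hsmul : ∀ (c : ℝ) v, gl (c • v) = c * gl v := by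
    intro c v
    refine tendsto_nhds_unique (hgl (c • v)) ?_
    simpa [real_inner_smul_right] using (hgl v).const_mul c
  have hbound : ∀ v, ‖gl v‖ ≤ C * ‖v‖ := by
    intro v
    have h1 : ∀ k, |(inner ℝ (u (σ k)) v : ℝ)| ≤ C * ‖v‖ := fun k =>
      (abs_real_inner_le_norm _ _).trans
        (mul_le_mul_of_nonneg_right (hu _) (norm_nonneg _))
    have h2 : Tendsto (fun k => |(inner ℝ (u (σ k)) v : ℝ)|) atTop (𝓝 |gl v|) :=
      (hgl v).abs
    exact le_of_tendsto h2 (Eventually.of_forall h1)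
  set Gl : X →L[ℝ] ℝ := LinearMap.mkContinuous
    { toFun := gl, map_add' := hadd, map_smul' := hsmul } C hbound with hGl
  refine ⟨σ, (InnerProductSpace.toDual ℝ X).symm Gl, hσ, fun v => ?_⟩
  have : (inner ℝ ((InnerProductSpace.toDual ℝ X).symm Gl) v : ℝ) = Gl v :=
    InnerProductSpace.toDual_symm_apply
  rw [this]
  exact hgl v

end DRAux

set_option maxHeartbeats 2000000 in
/-- Main theorem, first part: `(x_n, b_n)` converges weakly to a point of `S_e(A,B)`. -/
theorem dr_weak_convergence_xb {X : Type*} [NormedAddCommGroup X] [InnerProductSpace ℝ X]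
    [CompleteSpace X] (A B : Set (X × X))
    (hA : IsMaxMonotone A) (hB : IsMaxMonotone B)
    (lam : ℝ) (hlam : 0 < lam) (y a x b : ℕ → X) (hDR : IsDR A B lam y a x b)
    (hsol : ∃ z u v : X, (z, u) ∈ A ∧ (z, v) ∈ B ∧ u + v = 0) :
    ∃ zstar wstar : X, (zstar, wstar) ∈ Se A B ∧
      WeakConv x zstar ∧ WeakConv b wstar := by
  classical
  obtain ⟨z0, u0, w0, hz0A, hz0B, hu0⟩ := hsol
  have hz0Se : (z0, w0) ∈ Se A B := by
    refine ⟨hz0B, ?_⟩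
    have : u0 = -w0 := by
      have := hu0; exact eq_neg_of_add_eq_zero_left this
    rwa [this] at hz0A
  -- basic components of the DR relations
  have hyA : ∀ n : ℕ, (y (n+1), a (n+1)) ∈ A := fun n => (hDR (n+1) (Nat.le_add_left 1 n)).1
  have hxB : ∀ n : ℕ, 1 ≤ n → (x n, b n) ∈ B := fun n hn => (hDR n hn).2.2.1
  -- the error term
  set e : ℕ → X := fun n => x (n-1) - y n with he_def
  have hy : ∀ n : ℕ, y (n+1) = x n - e (n+1) := by
    intro n; simp only [he_def, Nat.add_sub_cancel]; abel
  have ha : ∀ n : ℕ, lam • a (n+1) = e (n+1) - lam • b n := by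
    intro n
    have h := (hDR (n+1) (Nat.le_add_left 1 n)).2.1
    simp only [Nat.add_sub_cancel] at h
    simp only [he_def, Nat.add_sub_cancel]
    have : lam • a (n+1) = x n - lam • b n - y (n+1) := by
      rw [← h]; abel
    rw [this]; abel
  have hyx : ∀ n : ℕ, y (n+1) = x (n+1) + lam • b (n+1) - lam • b n := by
    intro n
    have h := (hDR (n+1) (Nat.le_add_left 1 n)).2.2.2
    simp only [Nat.add_sub_cancel] at h
    have h2 := eq_sub_of_add_eq h.symm
    rw [h2]; abel
  have haX : ∀ n : ℕ, a (n+1) = lam⁻¹ • e (n+1) - b n := by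
    intro n
    calc a (n+1) = lam⁻¹ • (lam • a (n+1)) := by
          rw [smul_smul, inv_mul_cancel₀ hlam.ne', one_smul]
      _ = lam⁻¹ • (e (n+1) - lam • b n) := by rw [ha n]
      _ = lam⁻¹ • e (n+1) - b n := by
          rw [smul_sub, smul_smul, inv_mul_cancel₀ hlam.ne', one_smul]
  -- the Fejér function
  set Phi : X → X → ℕ → ℝ := fun z w n => ‖x n - z‖^2 + lam^2 * ‖b n - w‖^2 with hPhi_def
  have hPhi_nonneg : ∀ z w n, 0 ≤ Phi z w n := by
    intro z w n; simp only [hPhi_def]; positivity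
  -- the key identity
  have hkey : ∀ (z w : X) (n : ℕ),
      Phi z w (n+1) + ‖e (n+1)‖^2
        + 2*lam*(inner ℝ (x (n+1) - z) (b (n+1) - w) : ℝ)
        + 2*(inner ℝ (y (n+1) - z) (lam • a (n+1) + lam • w) : ℝ)
        = Phi z w n := by
    intro z w n
    have hid := dr_key_identity lam (x (n+1) - z) (b (n+1) - w) (x n - z) (b n - w)
    have hv1 : x n - z - (x (n+1) - z) - lam • ((b (n+1) - w) - (b n - w)) = e (n+1) := by
      have h1 : e (n+1) = x n - y (n+1) := by
        simp only [he_def, Nat.add_sub_cancel]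
      rw [h1, hyx n]
      module
    have hv2 : (x (n+1) - z) + lam • ((b (n+1) - w) - (b n - w)) = y (n+1) - z := by
      rw [hyx n]
      module
    have hv3 : x n - z - (x (n+1) - z) - lam • (b (n+1) - w) = lam • a (n+1) + lam • w := by
      have h2 := ha n
      have h1 : e (n+1) = x n - y (n+1) := by
        simp only [he_def, Nat.add_sub_cancel]
      rw [h2, h1, hyx n]
      module
    rw [hv1, hv2, hv3] at hid
    simp only [hPhi_def]
    linarith [hid]
  -- monotonicity-based step inequality, for any point of the extended solution set
  have hstep : ∀ (z w : X), (z, w) ∈ Se A B → ∀ n : ℕ,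
      Phi z w (n+1) + ‖e (n+1)‖^2 ≤ Phi z w n := by
    intro z w hzw n
    have hα : (0:ℝ) ≤ inner ℝ (x (n+1) - z) (b (n+1) - w) := by
      have := hB.1 (x (n+1), b (n+1)) (hxB (n+1) (Nat.le_add_left 1 n)) (z, w) hzw.1
      exact this
    have hβ : (0:ℝ) ≤ inner ℝ (y (n+1) - z) (lam • a (n+1) + lam • w) := by
      have h0 := hA.1 (y (n+1), a (n+1)) (hyA n) (z, -w) hzw.2
      have h1 : (0:ℝ) ≤ inner ℝ (y (n+1) - z) (a (n+1) - -w) := h0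
      have h2 : lam • a (n+1) + lam • w = lam • (a (n+1) - -w) := by
        rw [smul_sub, smul_neg]; abel
      rw [h2, real_inner_smul_right]
      exact mul_nonneg hlam.le h1
    have hk := hkey z w n
    have h3 : (0:ℝ) ≤ 2*lam*(inner ℝ (x (n+1) - z) (b (n+1) - w) : ℝ) := by
      have : (0:ℝ) ≤ 2*lam := by linarith
      exact mul_nonneg this hα
    linarith
  have hanti : ∀ (z w : X), (z, w) ∈ Se A B → Antitone (Phi z w) := by
    intro z w hzw
    refine antitone_nat_of_succ_le fun n => ?_
    have := hstep z w hzw n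
    have h2 := sq_nonneg ‖e (n+1)‖
    linarith
  have hPhiLim : ∀ (z w : X), (z, w) ∈ Se A B →
      ∃ Λ : ℝ, Tendsto (Phi z w) atTop (𝓝 Λ) := by
    intro z w hzw
    exact ⟨_, tendsto_atTop_ciInf (hanti z w hzw)
      ⟨0, by rintro _ ⟨n, rfl⟩; exact hPhi_nonneg z w n⟩⟩
  -- the error terms tend to zero
  obtain ⟨Λ0, hΛ0⟩ := hPhiLim z0 w0 hz0Se
  have he2 : Tendsto (fun n => ‖e (n+1)‖^2) atTop (𝓝 0) := by
    have hub : ∀ n, ‖e (n+1)‖^2 ≤ Phi z0 w0 n - Phi z0 w0 (n+1) := by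
      intro n; have := hstep z0 w0 hz0Se n; linarith
    have hdiff : Tendsto (fun n => Phi z0 w0 n - Phi z0 w0 (n+1)) atTop (𝓝 0) := by
      have := hΛ0.sub (hΛ0.comp (tendsto_add_atTop_nat 1))
      simpa using this
    exact squeeze_zero (fun n => sq_nonneg _) hub hdiff
  have he1 : Tendsto (fun n => ‖e (n+1)‖) atTop (𝓝 0) := by
    have : (fun n => ‖e (n+1)‖) = fun n => Real.sqrt (‖e (n+1)‖^2) := by
      funext n; rw [Real.sqrt_sq (norm_nonneg _)]
    rw [this]
    simpa using he2.sqrt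
  -- uniform bounds
  set C : ℝ := max (‖z0‖ + Real.sqrt (Phi z0 w0 0)) (‖w0‖ + Real.sqrt (Phi z0 w0 0 / lam^2))
    with hC_def
  have hC0 : 0 ≤ C := le_trans (by positivity) (le_max_left _ _)
  have hxC : ∀ n, ‖x n‖ ≤ C := by
    intro n
    have h1 : ‖x n - z0‖^2 ≤ Phi z0 w0 n := by
      simp only [hPhi_def]; nlinarith [sq_nonneg ‖b n - w0‖, sq_nonneg lam]
    have h2 : Phi z0 w0 n ≤ Phi z0 w0 0 := hanti z0 w0 hz0Se (Nat.zero_le n)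
    have h3 : ‖x n - z0‖ ≤ Real.sqrt (Phi z0 w0 0) :=
      (Real.le_sqrt (norm_nonneg _) (hPhi_nonneg z0 w0 0)).2 (h1.trans h2)
    calc ‖x n‖ = ‖z0 + (x n - z0)‖ := by rw [add_sub_cancel]
      _ ≤ ‖z0‖ + ‖x n - z0‖ := norm_add_le _ _
      _ ≤ ‖z0‖ + Real.sqrt (Phi z0 w0 0) := by linarith
      _ ≤ C := le_max_left _ _
  have hbC : ∀ n, ‖b n‖ ≤ C := by
    intro n
    have h1 : lam^2 * ‖b n - w0‖^2 ≤ Phi z0 w0 n := by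
      simp only [hPhi_def]; nlinarith [sq_nonneg ‖x n - z0‖]
    have h2 : Phi z0 w0 n ≤ Phi z0 w0 0 := hanti z0 w0 hz0Se (Nat.zero_le n)
    have h1' : ‖b n - w0‖^2 ≤ Phi z0 w0 0 / lam^2 := by
      rw [le_div_iff₀ (by positivity)]
      nlinarith
    have h3 : ‖b n - w0‖ ≤ Real.sqrt (Phi z0 w0 0 / lam^2) :=
      (Real.le_sqrt (norm_nonneg _) (by positivity)).2 h1'
    calc ‖b n‖ = ‖w0 + (b n - w0)‖ := by rw [add_sub_cancel]
      _ ≤ ‖w0‖ + ‖b n - w0‖ := norm_add_le _ _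
      _ ≤ ‖w0‖ + Real.sqrt (Phi z0 w0 0 / lam^2) := by linarith
      _ ≤ C := le_max_right _ _
  -- the cross-term control
  have hgamma0 : ∀ n m : ℕ, 1 ≤ n → 1 ≤ m →
      (0:ℝ) ≤ inner ℝ (x n - x m) (b n - b m) :=
    fun n m hn hm => hB.1 (x n, b n) (hxB n hn) (x m, b m) (hxB m hm)
  have hgammaUB : ∀ n m : ℕ,
      lam * (inner ℝ (x n - x m) (b n - b m) : ℝ)
        ≤ (‖e (n+1)‖ + ‖e (m+1)‖) * (2*C*(1+lam)) := by
    intro n m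
    have hmono := hA.1 (y (n+1), a (n+1)) (hyA n) (y (m+1), a (m+1)) (hyA m)
    have h0 : (0:ℝ) ≤ inner ℝ (y (n+1) - y (m+1)) (lam • (a (n+1) - a (m+1))) := by
      rw [real_inner_smul_right]
      exact mul_nonneg hlam.le hmono
    set P := x n - x m with hP
    set Q := b n - b m with hQ
    set E := e (n+1) - e (m+1) with hE
    have hyv : y (n+1) - y (m+1) = P - E := by
      rw [hy n, hy m, hP, hE]; abel
    have hav : lam • (a (n+1) - a (m+1)) = E - lam • Q := by
      rw [smul_sub, ha n, ha m, hE, hQ, smul_sub]; abel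
    rw [hyv, hav] at h0
    have hexp : (inner ℝ (P - E) (E - lam • Q) : ℝ)
        = inner ℝ P E - lam * inner ℝ P Q - inner ℝ E E + lam * inner ℝ E Q := by
      simp only [inner_sub_left, inner_sub_right, real_inner_smul_right,
        real_inner_comm E P]
      ring
    rw [hexp] at h0
    have hEE : (0:ℝ) ≤ inner ℝ E E := real_inner_self_nonneg
    have hPE : (inner ℝ P E : ℝ) ≤ ‖P‖ * ‖E‖ := real_inner_le_norm _ _
    have hEQ : (inner ℝ E Q : ℝ) ≤ ‖E‖ * ‖Q‖ := real_inner_le_norm _ _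
    have hPn : ‖P‖ ≤ 2*C := by
      rw [hP]
      calc ‖x n - x m‖ ≤ ‖x n‖ + ‖x m‖ := norm_sub_le _ _
        _ ≤ 2*C := by linarith [hxC n, hxC m]
    have hQn : ‖Q‖ ≤ 2*C := by
      rw [hQ]
      calc ‖b n - b m‖ ≤ ‖b n‖ + ‖b m‖ := norm_sub_le _ _
        _ ≤ 2*C := by linarith [hbC n, hbC m]
    have hEn : ‖E‖ ≤ ‖e (n+1)‖ + ‖e (m+1)‖ := norm_sub_le _ _
    have hEnn : (0:ℝ) ≤ ‖E‖ := norm_nonneg _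
    have h4a : lam * (inner ℝ E Q : ℝ) ≤ lam * (‖E‖ * ‖Q‖) :=
      mul_le_mul_of_nonneg_left hEQ hlam.le
    have h5 : lam * (inner ℝ P Q : ℝ) ≤ ‖P‖ * ‖E‖ + lam * (‖E‖ * ‖Q‖) := by linarith
    have h6 : ‖P‖ * ‖E‖ ≤ 2*C*‖E‖ := mul_le_mul_of_nonneg_right hPn hEnn
    have h7 : lam * (‖E‖ * ‖Q‖) ≤ lam * (‖E‖ * (2*C)) :=
      mul_le_mul_of_nonneg_left (mul_le_mul_of_nonneg_left hQn hEnn) hlam.le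
    have h8 : 2*C*‖E‖ + lam * (‖E‖ * (2*C)) = ‖E‖ * (2*C*(1+lam)) := by ring
    have h9 : ‖E‖ * (2*C*(1+lam)) ≤ (‖e (n+1)‖ + ‖e (m+1)‖) * (2*C*(1+lam)) := by
      have h2C : (0:ℝ) ≤ 2*C := by linarith
      have h10 : (0:ℝ) ≤ 2*C*(1+lam) := mul_nonneg h2C (by linarith)
      exact mul_le_mul_of_nonneg_right hEn h10
    linarith
  -- bound on the error term itself
  have heB : ∀ n : ℕ, ‖e (n+1)‖ ≤ 2*C + 2*(lam*C) := by
    intro n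
    have h1 : e (n+1) = (x n - x (n+1)) - (lam • b (n+1) - lam • b n) := by
      have h2 : e (n+1) = x n - y (n+1) := by
        simp only [he_def, Nat.add_sub_cancel]
      rw [h2, hyx n]; abel
    rw [h1]
    have h3 : ‖(x n - x (n+1)) - (lam • b (n+1) - lam • b n)‖
        ≤ ‖x n - x (n+1)‖ + ‖lam • b (n+1) - lam • b n‖ := norm_sub_le _ _
    have h4 : ‖x n - x (n+1)‖ ≤ ‖x n‖ + ‖x (n+1)‖ := norm_sub_le _ _
    have h5 : ‖lam • b (n+1) - lam • b n‖ ≤ ‖lam • b (n+1)‖ + ‖lam • b n‖ := norm_sub_le _ _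
    have h6 : ‖lam • b (n+1)‖ = lam * ‖b (n+1)‖ := by
      rw [norm_smul, Real.norm_eq_abs, abs_of_pos hlam]
    have h7 : ‖lam • b n‖ = lam * ‖b n‖ := by
      rw [norm_smul, Real.norm_eq_abs, abs_of_pos hlam]
    have h8 : lam * ‖b (n+1)‖ ≤ lam * C := mul_le_mul_of_nonneg_left (hbC _) hlam.le
    have h9 : lam * ‖b n‖ ≤ lam * C := mul_le_mul_of_nonneg_left (hbC _) hlam.le
    have h10 := hxC n; have h11 := hxC (n+1)
    rw [h6, h7] at h5
    linarith
  -- cluster point extraction: every subsequence has a further subsequence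
  -- converging weakly (jointly) to a point of the extended solution set
  have hclust : ∀ ns : ℕ → ℕ, Tendsto ns atTop atTop →
      ∃ (ms : ℕ → ℕ) (zb wb : X), Tendsto (fun k => ns (ms k)) atTop atTop ∧
        (zb, wb) ∈ Se A B ∧
        (∀ v : X, Tendsto (fun k => (inner ℝ (x (ns (ms k))) v : ℝ)) atTop (𝓝 (inner ℝ zb v))) ∧
        (∀ v : X, Tendsto (fun k => (inner ℝ (b (ns (ms k))) v : ℝ)) atTop (𝓝 (inner ℝ wb v))) := by
    intro ns hns
    obtain ⟨φ₁, zb, hφ₁, hx1⟩ := exists_weak_subseq (fun k => x (ns k)) C hC0 (fun k => hxC _)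
    obtain ⟨φ₂, wb, hφ₂, hb1⟩ :=
      exists_weak_subseq (fun k => b (ns (φ₁ k))) C hC0 (fun k => hbC _)
    have hcbd : ∀ k, (inner ℝ (x (ns (φ₁ (φ₂ k)))) (b (ns (φ₁ (φ₂ k)))) : ℝ)
        ∈ Set.Icc (-(C*C)) (C*C) := by
      intro k
      have h1 := abs_real_inner_le_norm (x (ns (φ₁ (φ₂ k)))) (b (ns (φ₁ (φ₂ k))))
      have h2 : ‖x (ns (φ₁ (φ₂ k)))‖ * ‖b (ns (φ₁ (φ₂ k)))‖ ≤ C*C :=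
        mul_le_mul (hxC _) (hbC _) (norm_nonneg _) hC0
      have := abs_le.1 (h1.trans h2); exact ⟨this.1, this.2⟩
    obtain ⟨L, -, φ₃, hφ₃, hcL⟩ :=
      tendsto_subseq_of_bounded (Metric.isBounded_Icc _ _) hcbd
    set ms : ℕ → ℕ := fun k => φ₁ (φ₂ (φ₃ k)) with hms
    set σ : ℕ → ℕ := fun k => ns (ms k) with hσ_def
    have hσtop : Tendsto σ atTop atTop :=
      hns.comp ((hφ₁.tendsto_atTop).comp ((hφ₂.tendsto_atTop).comp hφ₃.tendsto_atTop))
    have hxw : ∀ v : X, Tendsto (fun k => (inner ℝ (x (σ k)) v : ℝ)) atTop (𝓝 (inner ℝ zb v)) :=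
      fun v => (hx1 v).comp ((hφ₂.comp hφ₃).tendsto_atTop)
    have hbw : ∀ v : X, Tendsto (fun k => (inner ℝ (b (σ k)) v : ℝ)) atTop (𝓝 (inner ℝ wb v)) :=
      fun v => (hb1 v).comp hφ₃.tendsto_atTop
    have hc : Tendsto (fun k => (inner ℝ (x (σ k)) (b (σ k)) : ℝ)) atTop (𝓝 L) := hcL
    have hσ1 : ∀ᶠ k in atTop, 1 ≤ σ k := hσtop.eventually_ge_atTop 1
    have heσ : Tendsto (fun k => ‖e (σ k + 1)‖) atTop (𝓝 0) := he1.comp hσtop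
    -- the generic limit of the B-monotonicity quantities
    have hlimB : ∀ (u v : X), Tendsto (fun k => (inner ℝ (x (σ k) - u) (b (σ k) - v) : ℝ))
        atTop (𝓝 (L - inner ℝ zb v - inner ℝ wb u + inner ℝ u v)) := by
      intro u v
      have hfe : ∀ k, (inner ℝ (x (σ k) - u) (b (σ k) - v) : ℝ)
          = inner ℝ (x (σ k)) (b (σ k)) - inner ℝ (x (σ k)) v - inner ℝ (b (σ k)) u
            + inner ℝ u v := by
        intro k
        simp only [inner_sub_left, inner_sub_right, real_inner_comm (b (σ k)) u]
        ring
      simp only [hfe]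
      exact ((hc.sub (hxw v)).sub (hbw u)).add tendsto_const_nhds
    -- identification of the limit of the cross terms : L = ⟪zb, wb⟫
    have hL : L = inner ℝ zb wb := by
      set d : ℕ → ℝ := fun j =>
        L - inner ℝ zb (b (σ j)) - inner ℝ wb (x (σ j)) + inner ℝ (x (σ j)) (b (σ j)) with hd_def
      have hd0 : ∀ j, 1 ≤ σ j → 0 ≤ d j := fun j hj =>
        ge_of_tendsto (hlimB (x (σ j)) (b (σ j)))
          (hσ1.mono fun k hk => hgamma0 (σ k) (σ j) hk hj)
      have hdub : ∀ j, d j ≤ ‖e (σ j + 1)‖ * (2*C*(1+lam)) / lam := by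
        intro j
        have hup : Tendsto (fun k => (‖e (σ k + 1)‖ + ‖e (σ j + 1)‖) * (2*C*(1+lam)) / lam)
            atTop (𝓝 (‖e (σ j + 1)‖ * (2*C*(1+lam)) / lam)) := by
          have h1 := ((heσ.add_const ‖e (σ j + 1)‖).mul_const (2*C*(1+lam))).div_const lam
          simpa using h1
        refine le_of_tendsto_of_tendsto' (hlimB (x (σ j)) (b (σ j))) hup ?_
        intro k
        have h2 := hgammaUB (σ k) (σ j)
        rw [le_div_iff₀ hlam]
        linarith
      have hupper : Tendsto (fun j => ‖e (σ j + 1)‖ * (2*C*(1+lam)) / lam) atTop (𝓝 0) := by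
        have h1 := (heσ.mul_const (2*C*(1+lam))).div_const lam
        simpa using h1
      have hdlim : Tendsto d atTop (𝓝 (L - inner ℝ wb zb - inner ℝ zb wb + L)) := by
        have hfe : ∀ j, d j = L - inner ℝ (b (σ j)) zb - inner ℝ (x (σ j)) wb
            + inner ℝ (x (σ j)) (b (σ j)) := by
          intro j
          simp only [hd_def, real_inner_comm (b (σ j)) zb, real_inner_comm (x (σ j)) wb]
        rw [show d = (fun j => L - inner ℝ (b (σ j)) zb - inner ℝ (x (σ j)) wb
            + (inner ℝ (x (σ j)) (b (σ j)) : ℝ)) from funext hfe]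
        exact ((((tendsto_const_nhds (x := L)).sub (hbw zb)).sub (hxw wb))).add hc
      have h1 : 0 ≤ L - inner ℝ wb zb - inner ℝ zb wb + L :=
        ge_of_tendsto hdlim (hσ1.mono hd0)
      have h2 : L - inner ℝ wb zb - inner ℝ zb wb + L ≤ 0 :=
        le_of_tendsto_of_tendsto hdlim hupper (Eventually.of_forall hdub)
      have h3 := real_inner_comm zb wb
      linarith
    -- membership in B
    have hBmem : (zb, wb) ∈ B := by
      apply mem_of_isMaxMonotone hB
      rintro ⟨u, v⟩ hq
      have hlim := hlimB u v
      have hval : L - inner ℝ zb v - inner ℝ wb u + inner ℝ u v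
          = (inner ℝ (zb - u) (wb - v) : ℝ) := by
        rw [hL]
        simp only [inner_sub_left, inner_sub_right, real_inner_comm wb u]
        ring
      rw [hval] at hlim
      exact ge_of_tendsto hlim
        (hσ1.mono fun k hk => hB.1 (x (σ k), b (σ k)) (hxB _ hk) (u, v) hq)
    -- membership in A
    have hAmem : (zb, -wb) ∈ A := by
      apply mem_of_isMaxMonotone hA
      rintro ⟨u, v⟩ hq
      have hsplit : ∀ k, (inner ℝ (y (σ k + 1) - u) (a (σ k + 1) - v) : ℝ)
          = inner ℝ (x (σ k) - u) ((-1:ℝ) • b (σ k) - v)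
            + inner ℝ (x (σ k) - u) (lam⁻¹ • e (σ k + 1))
            + inner ℝ (-(e (σ k + 1))) (((-1:ℝ) • b (σ k) - v) + lam⁻¹ • e (σ k + 1)) := by
        intro k
        have h1 : y (σ k + 1) - u = (x (σ k) - u) + (-(e (σ k + 1))) := by
          rw [hy (σ k)]; abel
        have h2 : a (σ k + 1) - v = ((-1:ℝ) • b (σ k) - v) + lam⁻¹ • e (σ k + 1) := by
          rw [haX (σ k)]; module
        rw [h1, h2, inner_add_left, inner_add_right]
      have hmain : Tendsto (fun k => (inner ℝ (x (σ k) - u) ((-1:ℝ) • b (σ k) - v) : ℝ))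
          atTop (𝓝 (inner ℝ (zb - u) (-wb - v))) := by
        have hfe : ∀ k, (inner ℝ (x (σ k) - u) ((-1:ℝ) • b (σ k) - v) : ℝ)
            = -(inner ℝ (x (σ k)) (b (σ k)) : ℝ) - inner ℝ (x (σ k)) v
              + inner ℝ (b (σ k)) u + inner ℝ u v := by
          intro k
          simp only [inner_sub_left, inner_sub_right, real_inner_smul_right,
            real_inner_comm (b (σ k)) u]
          ring
        have hval : (inner ℝ (zb - u) (-wb - v) : ℝ)
            = -L - inner ℝ zb v + inner ℝ wb u + inner ℝ u v := by
          rw [hL]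
          simp only [inner_sub_left, inner_sub_right, inner_neg_right,
            real_inner_comm wb u]
          ring
        rw [hval]
        simp only [hfe]
        exact (((hc.neg.sub (hxw v))).add (hbw u)).add tendsto_const_nhds
      have herr1 : Tendsto (fun k => (inner ℝ (x (σ k) - u) (lam⁻¹ • e (σ k + 1)) : ℝ))
          atTop (𝓝 0) := by
        refine dr_tendsto_inner_err (Cf := C + ‖u‖) (fun k => ?_) ?_
        · calc ‖x (σ k) - u‖ ≤ ‖x (σ k)‖ + ‖u‖ := norm_sub_le _ _
            _ ≤ C + ‖u‖ := by linarith [hxC (σ k)]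
        · have h1 : ∀ k, ‖lam⁻¹ • e (σ k + 1)‖ = ‖lam⁻¹‖ * ‖e (σ k + 1)‖ := by
            intro k; rw [norm_smul]
          simp only [h1]
          simpa using heσ.const_mul ‖lam⁻¹‖
      have herr2 : Tendsto (fun k => (inner ℝ (-(e (σ k + 1)))
          (((-1:ℝ) • b (σ k) - v) + lam⁻¹ • e (σ k + 1)) : ℝ)) atTop (𝓝 0) := by
        refine dr_tendsto_inner_err' (Cg := C + ‖v‖ + ‖lam⁻¹‖ * (2*C + 2*(lam*C)))
          (fun k => ?_) ?_
        · have h1 : ‖((-1:ℝ) • b (σ k) - v) + lam⁻¹ • e (σ k + 1)‖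
              ≤ ‖(-1:ℝ) • b (σ k) - v‖ + ‖lam⁻¹ • e (σ k + 1)‖ := norm_add_le _ _
          have h2 : ‖(-1:ℝ) • b (σ k) - v‖ ≤ ‖(-1:ℝ) • b (σ k)‖ + ‖v‖ := norm_sub_le _ _
          have h3 : ‖(-1:ℝ) • b (σ k)‖ = ‖b (σ k)‖ := by
            rw [norm_smul]; simp
          have h4 : ‖lam⁻¹ • e (σ k + 1)‖ = ‖lam⁻¹‖ * ‖e (σ k + 1)‖ := by rw [norm_smul]
          have h5 : ‖lam⁻¹‖ * ‖e (σ k + 1)‖ ≤ ‖lam⁻¹‖ * (2*C + 2*(lam*C)) :=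
            mul_le_mul_of_nonneg_left (heB (σ k)) (norm_nonneg _)
          have h6 := hbC (σ k)
          rw [h3] at h2; rw [h4] at h1
          linarith
        · simpa using heσ.neg.norm.congr (fun k => by rw [norm_neg, Real.norm_eq_abs,
            abs_of_nonneg (norm_nonneg _)])
      have htot : Tendsto (fun k => (inner ℝ (y (σ k + 1) - u) (a (σ k + 1) - v) : ℝ))
          atTop (𝓝 (inner ℝ (zb - u) (-wb - v))) := by
        simp only [hsplit]
        simpa using (hmain.add herr1).add herr2
      exact ge_of_tendsto htot (Eventually.of_forall fun k =>
        hA.1 (y (σ k + 1), a (σ k + 1)) (hyA (σ k)) (u, v) hq)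
    exact ⟨ms, zb, wb, hσtop, ⟨hBmem, hAmem⟩, hxw, hbw⟩
  -- apply the cluster extraction to the full sequence
  obtain ⟨ms0, zb, wb, hσ0top, hmem0, hx0, hb0⟩ := hclust id tendsto_id
  -- Opial-type uniqueness of the weak cluster point
  have huniq : ∀ (τ : ℕ → ℕ) (z' w' : X), Tendsto τ atTop atTop → (z', w') ∈ Se A B →
      (∀ v : X, Tendsto (fun k => (inner ℝ (x (τ k)) v : ℝ)) atTop (𝓝 (inner ℝ z' v))) →
      (∀ v : X, Tendsto (fun k => (inner ℝ (b (τ k)) v : ℝ)) atTop (𝓝 (inner ℝ w' v))) →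
      z' = zb ∧ w' = wb := by
    intro τ z' w' hτ hmem' hx' hb'
    obtain ⟨Λ1, hΛ1⟩ := hPhiLim zb wb hmem0
    obtain ⟨Λ2, hΛ2⟩ := hPhiLim z' w' hmem'
    have hΨ : Tendsto (fun n => Phi zb wb n - Phi z' w' n) atTop (𝓝 (Λ1 - Λ2)) :=
      hΛ1.sub hΛ2
    have hexp : ∀ n, Phi zb wb n - Phi z' w' n
        = (-(2 * (inner ℝ (x n) zb : ℝ)) + 2 * inner ℝ (x n) z')
          + lam^2 * (-(2 * (inner ℝ (b n) wb : ℝ)) + 2 * inner ℝ (b n) w')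
          + (‖zb‖^2 + lam^2*‖wb‖^2 - ‖z'‖^2 - lam^2*‖w'‖^2) := by
      intro n
      simp only [hPhi_def]
      rw [norm_sub_sq_real (x n) zb, norm_sub_sq_real (x n) z',
        norm_sub_sq_real (b n) wb, norm_sub_sq_real (b n) w']
      ring
    have hlimPhi : ∀ (τ' : ℕ → ℕ) (zl wl : X),
        (∀ v : X, Tendsto (fun k => (inner ℝ (x (τ' k)) v : ℝ)) atTop (𝓝 (inner ℝ zl v))) →
        (∀ v : X, Tendsto (fun k => (inner ℝ (b (τ' k)) v : ℝ)) atTop (𝓝 (inner ℝ wl v))) →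
        Tendsto (fun k => Phi zb wb (τ' k) - Phi z' w' (τ' k)) atTop
          (𝓝 ((-(2 * (inner ℝ zl zb : ℝ)) + 2 * inner ℝ zl z')
            + lam^2 * (-(2 * (inner ℝ wl wb : ℝ)) + 2 * inner ℝ wl w')
            + (‖zb‖^2 + lam^2*‖wb‖^2 - ‖z'‖^2 - lam^2*‖w'‖^2))) := by
      intro τ' zl wl hxl hbl
      have hfeq : (fun k => Phi zb wb (τ' k) - Phi z' w' (τ' k))
          = fun k => (-(2 * (inner ℝ (x (τ' k)) zb : ℝ)) + 2 * inner ℝ (x (τ' k)) z')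
            + lam^2 * (-(2 * (inner ℝ (b (τ' k)) wb : ℝ)) + 2 * inner ℝ (b (τ' k)) w')
            + (‖zb‖^2 + lam^2*‖wb‖^2 - ‖z'‖^2 - lam^2*‖w'‖^2) :=
        funext fun k => hexp (τ' k)
      rw [hfeq]
      exact ((((hxl zb).const_mul 2).neg.add ((hxl z').const_mul 2)).add
        ((((hbl wb).const_mul 2).neg.add ((hbl w').const_mul 2)).const_mul (lam^2))).add
        tendsto_const_nhds
    have hV1 := tendsto_nhds_unique (hlimPhi ms0 zb wb hx0 hb0) (hΨ.comp hσ0top)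
    have hV2 := tendsto_nhds_unique (hlimPhi τ z' w' hx' hb') (hΨ.comp hτ)
    have hVV : (-(2 * (inner ℝ zb zb : ℝ)) + 2 * inner ℝ zb z')
          + lam^2 * (-(2 * (inner ℝ wb wb : ℝ)) + 2 * inner ℝ wb w')
        = (-(2 * (inner ℝ z' zb : ℝ)) + 2 * inner ℝ z' z')
          + lam^2 * (-(2 * (inner ℝ w' wb : ℝ)) + 2 * inner ℝ w' w') := by
      linarith [hV1, hV2]
    have is1 : (inner ℝ zb zb : ℝ) = ‖zb‖^2 := real_inner_self_eq_norm_sq zb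
    have is2 : (inner ℝ z' z' : ℝ) = ‖z'‖^2 := real_inner_self_eq_norm_sq z'
    have c1 : (inner ℝ z' zb : ℝ) = inner ℝ zb z' := real_inner_comm zb z'
    have j1 : lam^2 * (inner ℝ wb wb : ℝ) = lam^2 * ‖wb‖^2 := by
      rw [real_inner_self_eq_norm_sq]
    have j2 : lam^2 * (inner ℝ w' w' : ℝ) = lam^2 * ‖w'‖^2 := by
      rw [real_inner_self_eq_norm_sq]
    have j3 : lam^2 * (inner ℝ w' wb : ℝ) = lam^2 * (inner ℝ wb w' : ℝ) := by
      rw [real_inner_comm wb w']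
    have hzsq : ‖zb - z'‖^2 = ‖zb‖^2 - 2 * inner ℝ zb z' + ‖z'‖^2 :=
      norm_sub_sq_real zb z'
    have hwsq : lam^2 * ‖wb - w'‖^2
        = lam^2 * ‖wb‖^2 - 2 * (lam^2 * (inner ℝ wb w' : ℝ)) + lam^2 * ‖w'‖^2 := by
      rw [norm_sub_sq_real wb w']; ring
    have hzero : ‖zb - z'‖^2 + lam^2 * ‖wb - w'‖^2 = 0 := by
      rw [hzsq, hwsq]
      linarith [hVV, is1, is2, c1, j1, j2, j3]
    have hz2 : ‖zb - z'‖^2 = 0 := by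
      have h1 : 0 ≤ lam^2 * ‖wb - w'‖^2 := by positivity
      have h2 : 0 ≤ ‖zb - z'‖^2 := sq_nonneg _
      linarith
    have hw2 : ‖wb - w'‖^2 = 0 := by
      have h1 : 0 ≤ lam^2 * ‖wb - w'‖^2 := by positivity
      have h2 : 0 ≤ ‖zb - z'‖^2 := sq_nonneg _
      have h3 : lam^2 * ‖wb - w'‖^2 = 0 := by linarith
      have h4 : lam^2 ≠ 0 := by positivity
      exact by
        have := mul_eq_zero.1 h3
        rcases this with h | h
        · exact absurd h h4
        · exact h
    have hz3 : zb = z' := by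
      have : ‖zb - z'‖ = 0 := by
        have := sq_eq_zero_iff.1 hz2
        exact this
      rw [norm_eq_zero, sub_eq_zero] at this
      exact this
    have hw3 : wb = w' := by
      have : ‖wb - w'‖ = 0 := sq_eq_zero_iff.1 hw2
      rw [norm_eq_zero, sub_eq_zero] at this
      exact this
    exact ⟨hz3.symm, hw3.symm⟩
  -- conclusion
  refine ⟨zb, wb, hmem0, ?_, ?_⟩
  · intro v
    refine tendsto_of_subseq_tendsto fun ns hns => ?_
    obtain ⟨ms, z', w', hms_top, hmem', hx', hb'⟩ := hclust ns hns
    obtain ⟨hz, hw⟩ := huniq (fun k => ns (ms k)) z' w' hms_top hmem' hx' hb'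
    exact ⟨ms, by rw [← hz]; exact hx' v⟩
  · intro v
    refine tendsto_of_subseq_tendsto fun ns hns => ?_
    obtain ⟨ms, z', w', hms_top, hmem', hx', hb'⟩ := hclust ns hns
    obtain ⟨hz, hw⟩ := huniq (fun k => ns (ms k)) z' w' hms_top hmem' hx' hb'
    exact ⟨ms, by rw [← hw]; exact hb' v⟩
end

section
/- Let A, B be maximal monotone operators on a real Hilbert space X and let (y_n, a_n, x_n, b_n) be sequences generated by the Douglas–Rachford method with stepsize λ = 1 from initial points x₀, b₀ ∈ X. Then for every p = (z, w) ∈ S_e(A,B) and every n ≥ 1, with p_n = (x_n, b_n) ∈ X × X, one has ‖p − p_{n−1}‖² ≥ ‖p − p_n‖² + ‖a_n + b_{n−1}‖², where X × X carries the Hilbert product norm ‖(u,v)‖² = ‖u‖² + ‖v‖². -/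
open Filter Topology

/-- Fejér inequality for `p_n = (x_n, b_n)` w.r.t. any `p = (z,w) ∈ S_e(A,B)`, stepsize 1,
where `X × X` carries the Hilbert product norm `‖(u,v)‖² = ‖u‖² + ‖v‖²`. -/
theorem dr_fejer_step {X : Type*} [NormedAddCommGroup X] [InnerProductSpace ℝ X]
    [CompleteSpace X] (A B : Set (X × X))
    (hA : IsMaxMonotone A) (hB : IsMaxMonotone B)
    (y a x b : ℕ → X) (hDR : IsDR A B 1 y a x b)
    (z w : X) (hp : (z, w) ∈ Se A B) (n : ℕ) (hn : 1 ≤ n) :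
    ‖z - x n‖ ^ 2 + ‖w - b n‖ ^ 2 + ‖a n + b (n - 1)‖ ^ 2 ≤
      ‖z - x (n - 1)‖ ^ 2 + ‖w - b (n - 1)‖ ^ 2 := by

  obtain ⟨hAy, heq1, hBx, heq2⟩ := hDR n hn
  have hBz : (z, w) ∈ B := hp.1
  have hAz : (z, -w) ∈ A := hp.2
  have h1 : (0:ℝ) ≤ inner ℝ (y n - z) (a n + w) := by
    have := hA.1 _ hAy _ hAz
    simpa [sub_neg_eq_add] using this
  have h2 : (0:ℝ) ≤ inner ℝ (x n - z) (b n - w) := by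
    exact hB.1 _ hBx _ hBz
  have hy : y n = x (n-1) - b (n-1) - a n := by
    have h := heq1; simp only [one_smul] at h
    rw [← h]; abel
  have hx : x n = x (n-1) - a n - b n := by
    have h := heq2; simp only [one_smul, hy] at h
    rw [eq_sub_of_add_eq' h]; abel
  set u := x (n-1) with hu
  set be := b (n-1) with hbe
  have key : ‖z - u‖ ^ 2 + ‖w - be‖ ^ 2 - ‖z - x n‖ ^ 2 - ‖w - b n‖ ^ 2
      - ‖a n + be‖ ^ 2
      = 2 * inner ℝ (y n - z) (a n + w) + 2 * inner ℝ (x n - z) (b n - w) := by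
    rw [hy, hx]
    simp only [← real_inner_self_eq_norm_sq, inner_sub_left, inner_sub_right,
      inner_add_left, inner_add_right]
    ring_nf
    linarith [real_inner_comm z u, real_inner_comm z (a n), real_inner_comm z (b n),
      real_inner_comm z w, real_inner_comm z be, real_inner_comm u (a n),
      real_inner_comm u (b n), real_inner_comm u w, real_inner_comm u be,
      real_inner_comm (a n) (b n), real_inner_comm (a n) w, real_inner_comm (a n) be,
      real_inner_comm (b n) w, real_inner_comm (b n) be, real_inner_comm w be]
  linarith
end

section
/- Let A, B be maximal monotone operators on a real Hilbert space X and let (y_n, a_n, x_n, b_n) be sequences generated by the Douglas–Rachford method with stepsize λ = 1 from initial points x₀, b₀ ∈ X. Then for every p = (z, w) ∈ S_e(A,B) and every n ≥ 1, with p_n = (x_n, b_n), one has ‖p − p₀‖² ≥ ‖p − p_n‖² + Σ_{k=1}^{n} ‖a_k + b_{k−1}‖², where X × X carries the Hilbert product norm ‖(u,v)‖² = ‖u‖² + ‖v‖². -/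
open Filter Topology

lemma dr_step_aux {X : Type*} [NormedAddCommGroup X] [InnerProductSpace ℝ X]
    (z w xo bo a yn xn bn : X)
    (h1 : a + yn = xo - bo) (h2 : bn + xn = yn + bo)
    (mA : (0:ℝ) ≤ inner ℝ (yn - z) (a - -w)) (mB : (0:ℝ) ≤ inner ℝ (xn - z) (bn - w)) :
    ‖z - xn‖ ^ 2 + ‖w - bn‖ ^ 2 + ‖a + bo‖ ^ 2 ≤ ‖z - xo‖ ^ 2 + ‖w - bo‖ ^ 2 := by
  have hy : yn = xo - bo - a := eq_sub_of_add_eq' h1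
  have hx : xn = yn + bo - bn := eq_sub_of_add_eq' h2
  subst hy; subst hx
  simp only [← real_inner_self_eq_norm_sq] at *
  simp only [inner_sub_left, inner_sub_right, inner_add_left, inner_add_right,
    inner_neg_left, inner_neg_right, real_inner_comm] at *
  linarith

lemma dr_step {X : Type*} [NormedAddCommGroup X] [InnerProductSpace ℝ X]
    (A B : Set (X × X)) (hA : IsMaxMonotone A) (hB : IsMaxMonotone B)
    (y a x b : ℕ → X) (hDR : IsDR A B 1 y a x b)
    (z w : X) (hp : (z, w) ∈ Se A B) (k : ℕ) (hk : 1 ≤ k) :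
    ‖z - x k‖ ^ 2 + ‖w - b k‖ ^ 2 + ‖a k + b (k-1)‖ ^ 2 ≤
      ‖z - x (k-1)‖ ^ 2 + ‖w - b (k-1)‖ ^ 2 := by
  obtain ⟨hyA, h1, hxB, h2⟩ := hDR k hk
  simp only [one_smul] at h1 h2
  have mA := hA.1 _ hyA _ hp.2
  have mB := hB.1 _ hxB _ hp.1
  exact dr_step_aux z w (x (k-1)) (b (k-1)) (a k) (y k) (x k) (b k) h1 h2 mA mB

/-- Summed Fejér inequality for `p_n = (x_n, b_n)` w.r.t. any `p = (z,w) ∈ S_e(A,B)`,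
stepsize 1, with the Hilbert product norm `‖(u,v)‖² = ‖u‖² + ‖v‖²` on `X × X`. -/
theorem dr_fejer_sum {X : Type*} [NormedAddCommGroup X] [InnerProductSpace ℝ X]
    [CompleteSpace X] (A B : Set (X × X))
    (hA : IsMaxMonotone A) (hB : IsMaxMonotone B)
    (y a x b : ℕ → X) (hDR : IsDR A B 1 y a x b)
    (z w : X) (hp : (z, w) ∈ Se A B) (n : ℕ) (hn : 1 ≤ n) :
    ‖z - x n‖ ^ 2 + ‖w - b n‖ ^ 2 + ∑ k ∈ Finset.Icc 1 n, ‖a k + b (k - 1)‖ ^ 2 ≤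
      ‖z - x 0‖ ^ 2 + ‖w - b 0‖ ^ 2 := by
  induction n, hn using Nat.le_induction with
  | base =>
    simpa using dr_step A B hA hB y a x b hDR z w hp 1 le_rfl
  | succ n hn ih =>
    have hstep := dr_step A B hA hB y a x b hDR z w hp (n+1) (by omega)
    rw [Finset.sum_Icc_succ_top (by omega : 1 ≤ n + 1)]
    simp only [Nat.add_sub_cancel] at hstep ⊢
    linarith
end

section
/- Let A, B be maximal monotone operators on a real Hilbert space X and let (y_n, a_n, x_n, b_n) be sequences generated by the Douglas–Rachford method with stepsize λ = 1 from initial points x₀, b₀ ∈ X. If S_e(A,B) is nonempty, then Σ_{n=1}^{∞} ‖a_n + b_{n−1}‖² < ∞; in particular a_n + b_{n−1} = x_{n−1} − y_n → 0 strongly as n → ∞. -/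
open Filter Topology

/-- Auxiliary norm identity. -/
lemma dr_norm_id {X : Type*} [NormedAddCommGroup X] [InnerProductSpace ℝ X]
    (u v t m : X) :
    ‖u + v + t + m‖ ^ 2 + ‖t + m‖ ^ 2 =
      ‖u + m‖ ^ 2 + ‖t‖ ^ 2 + ‖v + t + m‖ ^ 2 +
        2 * (inner ℝ u v : ℝ) + 2 * (inner ℝ (u + m) t : ℝ) := by
  simp only [← real_inner_self_eq_norm_sq, inner_add_left, inner_add_right]
  linarith [real_inner_comm u v, real_inner_comm u t, real_inner_comm u m,
    real_inner_comm v t, real_inner_comm v m, real_inner_comm t m]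

/-- The key one-step Fejér inequality. -/
lemma dr_key {X : Type*} [NormedAddCommGroup X] [InnerProductSpace ℝ X]
    (yn an xs bn xn1 bn1 z w : X)
    (h1 : an + yn = xs - bn)
    (h2 : bn1 + xn1 = yn + bn)
    (hm1 : (0 : ℝ) ≤ inner ℝ (yn - z) (an + w))
    (hm2 : (0 : ℝ) ≤ inner ℝ (xn1 - z) (bn1 - w)) :
    ‖xn1 - z‖ ^ 2 + ‖bn1 - w‖ ^ 2 + ‖an + bn‖ ^ 2 ≤ ‖xs - z‖ ^ 2 + ‖bn - w‖ ^ 2 := by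
  have hxs : xs = an + yn + bn := by
    have := sub_eq_iff_eq_add.mp h1.symm
    exact this
  have hxn1 : xn1 = yn + bn - bn1 := by
    rw [eq_sub_iff_add_eq, add_comm]
    exact h2
  subst hxs hxn1
  have r1 : yn + bn - bn1 - z = (yn - z) + (bn - bn1) := by abel
  have r2 : an + yn + bn - z = (yn - z) + (an + w) + (bn1 - w) + (bn - bn1) := by abel
  have r3 : bn - w = (bn1 - w) + (bn - bn1) := by abel
  have r4 : an + bn = (an + w) + (bn1 - w) + (bn - bn1) := by abel
  rw [r1] at hm2
  rw [r1, r2, r3, r4]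
  have hid := dr_norm_id (yn - z) (an + w) (bn1 - w) (bn - bn1)
  have hvtm : (an + w) + (bn1 - w) + (bn - bn1) = (an + w) + ((bn1 - w) + (bn - bn1)) := by
    abel
  rw [hvtm] at hid ⊢
  linarith [hm1, hm2, hid]

/-- If `S_e(A,B) ≠ ∅` then `∑ ‖a_n + b_{n-1}‖² < ∞`; in particular
`a_n + b_{n-1} = x_{n-1} - y_n → 0` strongly. -/
theorem dr_summable {X : Type*} [NormedAddCommGroup X] [InnerProductSpace ℝ X]
    [CompleteSpace X] (A B : Set (X × X))
    (hA : IsMaxMonotone A) (hB : IsMaxMonotone B)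
    (y a x b : ℕ → X) (hDR : IsDR A B 1 y a x b)
    (hne : (Se A B).Nonempty) :
    Summable (fun n : ℕ => ‖a (n + 1) + b n‖ ^ 2) ∧
    (∀ n, 1 ≤ n → a n + b (n - 1) = x (n - 1) - y n) ∧
    Tendsto (fun n : ℕ => a (n + 1) + b n) atTop (𝓝 0) := by
  obtain ⟨⟨z, w⟩, hzB, hzA⟩ := hne
  set φ : ℕ → ℝ := fun n => ‖x n - z‖ ^ 2 + ‖b n - w‖ ^ 2 with hφ
  have key : ∀ n : ℕ, φ (n + 1) + ‖a (n + 1) + b n‖ ^ 2 ≤ φ n := by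
    intro n
    obtain ⟨hAmem, h1, hBmem, h2⟩ := hDR (n + 1) (Nat.le_add_left 1 n)
    simp only [one_smul, Nat.add_sub_cancel] at h1 h2
    have hm1 : (0 : ℝ) ≤ inner ℝ (y (n + 1) - z) (a (n + 1) + w) := by
      have := hA.1 _ hAmem _ hzA
      simpa [sub_neg_eq_add] using this
    have hm2 : (0 : ℝ) ≤ inner ℝ (x (n + 1) - z) (b (n + 1) - w) := by
      have := hB.1 _ hBmem _ hzB
      simpa using this
    have := dr_key (y (n + 1)) (a (n + 1)) (x n) (b n) (x (n + 1)) (b (n + 1)) z w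
      h1 h2 hm1 hm2
    simp only [hφ]
    linarith
  have hφ0 : ∀ n, 0 ≤ φ n := fun n => by positivity
  have hpartial : ∀ N : ℕ, (∑ i ∈ Finset.range N, ‖a (i + 1) + b i‖ ^ 2) + φ N ≤ φ 0 := by
    intro N
    induction N with
    | zero => simp
    | succ N ih =>
      rw [Finset.sum_range_succ]
      have := key N
      linarith
  have hsummable : Summable (fun n : ℕ => ‖a (n + 1) + b n‖ ^ 2) := by
    apply summable_of_sum_range_le (c := φ 0) (fun n => by positivity)
    intro N
    have := hpartial N
    have := hφ0 N
    linarith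
  refine ⟨hsummable, ?_, ?_⟩
  · intro n hn
    have h1 := (hDR n hn).2.1
    simp only [one_smul] at h1
    have ha : a n = x (n - 1) - b (n - 1) - y n := by
      rw [← h1]; abel
    rw [ha]; abel
  · have h0 := hsummable.tendsto_atTop_zero
    rw [tendsto_zero_iff_norm_tendsto_zero]
    have hs : Tendsto (fun n : ℕ => Real.sqrt (‖a (n + 1) + b n‖ ^ 2)) atTop
        (𝓝 (Real.sqrt 0)) :=
      (Real.continuous_sqrt.continuousAt.tendsto).comp h0
    have heq : (fun n : ℕ => Real.sqrt (‖a (n + 1) + b n‖ ^ 2)) =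
        fun n : ℕ => ‖a (n + 1) + b n‖ :=
      funext fun n => Real.sqrt_sq (norm_nonneg _)
    rw [heq, Real.sqrt_zero] at hs
    exact hs
end

section
/- Let A, B be maximal monotone operators on a real Hilbert space X and let (y_n, a_n, x_n, b_n) be sequences generated by the Douglas–Rachford method with stepsize λ = 1 from initial points x₀, b₀ ∈ X. If S_e(A,B) is nonempty, then the sequences (x_n) and (b_n) are bounded in X. -/
open Filter Topology

/-- Key contraction step: one Douglas–Rachford step does not increase the distance
of `x + b` to `z + w`. -/
lemma dr_key_s12 {X : Type*} [NormedAddCommGroup X] [InnerProductSpace ℝ X] (p q u v z w : X)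
    (h1 : (0:ℝ) ≤ inner ℝ (p - z) (q - w))
    (h2 : (0:ℝ) ≤ inner ℝ ((u + v - q) - z) ((p - u - v) + w)) :
    ‖u + v - (z + w)‖ ≤ ‖p + q - (z + w)‖ := by
  set V := u + v - (z + w) with hV
  set U := p + q - (z + w) with hU
  have hid : (inner ℝ (p - z) (q - w) : ℝ) + inner ℝ ((u + v - q) - z) ((p - u - v) + w)
      = inner ℝ V (U - V) := by
    rw [hV, hU]
    simp only [inner_sub_left, inner_sub_right, inner_add_left, inner_add_right]
    ring_nf
    linarith [real_inner_comm p q, real_inner_comm p z, real_inner_comm p w,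
      real_inner_comm p u, real_inner_comm p v, real_inner_comm q z, real_inner_comm q w,
      real_inner_comm q u, real_inner_comm q v, real_inner_comm z w, real_inner_comm z u,
      real_inner_comm z v, real_inner_comm w u, real_inner_comm w v, real_inner_comm u v]
  have h3 : (0:ℝ) ≤ inner ℝ V (U - V) := hid ▸ add_nonneg h1 h2
  have h4 : ‖V‖ ^ 2 ≤ (inner ℝ V U : ℝ) := by
    have := real_inner_self_eq_norm_sq V
    rw [inner_sub_right] at h3
    nlinarith
  have h5 : (inner ℝ V U : ℝ) ≤ ‖V‖ * ‖U‖ := real_inner_le_norm V U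
  nlinarith [norm_nonneg V, norm_nonneg U]

/-- Both summands of a sum with nonnegative cross inner ℝ product are norm-bounded by the sum. -/
lemma dr_split {X : Type*} [NormedAddCommGroup X] [InnerProductSpace ℝ X] (c d : X) (h : (0:ℝ) ≤ inner ℝ c d) : ‖c‖ ≤ ‖c + d‖ ∧ ‖d‖ ≤ ‖c + d‖ := by
  have e : ‖c + d‖ ^ 2 = ‖c‖ ^ 2 + 2 * inner ℝ c d + ‖d‖ ^ 2 := norm_add_sq_real c d
  constructor <;> [skip; skip] <;>
  · nlinarith [norm_nonneg c, norm_nonneg d, norm_nonneg (c + d), sq_nonneg ‖c‖, sq_nonneg ‖d‖]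

/-- If `S_e(A,B) ≠ ∅` then the sequences `(x_n)` and `(b_n)` are bounded. -/
theorem dr_bounded {X : Type*} [NormedAddCommGroup X] [InnerProductSpace ℝ X]
    [CompleteSpace X] (A B : Set (X × X))
    (hA : IsMaxMonotone A) (hB : IsMaxMonotone B)
    (y a x b : ℕ → X) (hDR : IsDR A B 1 y a x b)
    (hne : (Se A B).Nonempty) :
    ∃ M : ℝ, ∀ n, ‖x n‖ ≤ M ∧ ‖b n‖ ≤ M := by
  obtain ⟨⟨z, w⟩, hzB, hzA⟩ := hne
  simp only [Se] at hzB hzA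
  -- Fejér step for n ≥ 2
  have step : ∀ n, 2 ≤ n → ‖x n + b n - (z + w)‖ ≤ ‖x (n-1) + b (n-1) - (z + w)‖ := by
    intro n hn
    obtain ⟨hyA, e1, hxB, e2⟩ := hDR n (by omega)
    obtain ⟨_, _, hxB', _⟩ := hDR (n-1) (by omega)
    simp only [one_smul] at e1 e2
    have hy : y n = x n + b n - b (n-1) := by
      linear_combination (norm := abel) -e2
    have ha : a n = x (n-1) - x n - b n := by
      have : a n = x (n-1) - b (n-1) - y n := by
        linear_combination (norm := abel) e1
      rw [this, hy]; abel
    have h1 : (0:ℝ) ≤ inner ℝ (x (n-1) - z) (b (n-1) - w) := hB.1 _ hxB' _ hzB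
    have h2 : (0:ℝ) ≤ inner ℝ ((x n + b n - b (n-1)) - z) ((x (n-1) - x n - b n) + w) := by
      have := hA.1 _ hyA _ hzA
      simp only [sub_neg_eq_add] at this
      rwa [hy, ha] at this
    exact dr_key_s12 (x (n-1)) (b (n-1)) (x n) (b n) z w h1 h2
  -- Fejér monotonicity: for n ≥ 1, distance bounded by the value at n = 1
  have fej : ∀ n, 1 ≤ n → ‖x n + b n - (z + w)‖ ≤ ‖x 1 + b 1 - (z + w)‖ := by
    intro n hn
    induction n, hn using Nat.le_induction with
    | base => exact le_refl _
    | succ n hn ih =>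
      have := step (n+1) (by omega)
      simpa using this.trans ih
  set C := ‖x 1 + b 1 - (z + w)‖ with hC
  refine ⟨max (max ‖x 0‖ ‖b 0‖) (max ‖z‖ ‖w‖ + C), ?_⟩
  intro n
  rcases Nat.eq_zero_or_pos n with rfl | hn
  · exact ⟨le_max_of_le_left (le_max_left _ _), le_max_of_le_left (le_max_right _ _)⟩
  · obtain ⟨_, _, hxB, _⟩ := hDR n hn
    have h0 : (0:ℝ) ≤ inner ℝ (x n - z) (b n - w) := hB.1 _ hxB _ hzB
    have hsum : (x n - z) + (b n - w) = x n + b n - (z + w) := by abel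
    obtain ⟨hx', hb'⟩ := dr_split (x n - z) (b n - w) h0
    rw [hsum] at hx' hb'
    have hF := fej n hn
    constructor
    · have : ‖x n‖ ≤ ‖x n - z‖ + ‖z‖ := by
        simpa using norm_add_le (x n - z) z
      refine le_max_of_le_right ?_
      have : ‖x n‖ ≤ ‖z‖ + C := by linarith
      linarith [le_max_left ‖z‖ ‖w‖]
    · have : ‖b n‖ ≤ ‖b n - w‖ + ‖w‖ := by
        simpa using norm_add_le (b n - w) w
      refine le_max_of_le_right ?_
      have : ‖b n‖ ≤ ‖w‖ + C := by linarith
      linarith [le_max_right ‖z‖ ‖w‖]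
end

section
/- Let A, B be maximal monotone operators on a real Hilbert space X and let (y_n, a_n, x_n, b_n) be sequences generated by the Douglas–Rachford method with stepsize λ = 1 from initial points x₀, b₀ ∈ X. Then for every n ≥ 2, ‖a_n − a_{n−1}‖² + ‖y_n − y_{n−1}‖² ≤ ‖x_{n−1} − y_{n−1} − (a_{n−1} + b_{n−1})‖². -/
open Filter Topology

/-- For all `n ≥ 2`,
`‖a_n - a_{n-1}‖² + ‖y_n - y_{n-1}‖² ≤ ‖x_{n-1} - y_{n-1} - (a_{n-1} + b_{n-1})‖²`. -/
theorem dr_item4_ineq {X : Type*} [NormedAddCommGroup X] [InnerProductSpace ℝ X]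
    [CompleteSpace X] (A B : Set (X × X))
    (hA : IsMaxMonotone A) (hB : IsMaxMonotone B)
    (y a x b : ℕ → X) (hDR : IsDR A B 1 y a x b) (n : ℕ) (hn : 2 ≤ n) :
    ‖a n - a (n - 1)‖ ^ 2 + ‖y n - y (n - 1)‖ ^ 2 ≤
      ‖x (n - 1) - y (n - 1) - (a (n - 1) + b (n - 1))‖ ^ 2 := by
  obtain ⟨hmemA, heq, -, -⟩ := hDR n (by omega)
  obtain ⟨hmemA', -, -, -⟩ := hDR (n - 1) (by omega)
  have hmono := hA.1 _ hmemA _ hmemA'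
  simp only [one_smul] at heq
  have hx : x (n - 1) = a n + y n + b (n - 1) := by rw [heq]; abel
  have hsum : (a n - a (n - 1)) + (y n - y (n - 1)) =
      x (n - 1) - y (n - 1) - (a (n - 1) + b (n - 1)) := by rw [hx]; abel
  rw [← hsum, norm_add_sq_real]
  have hcomm := real_inner_comm (y n - y (n - 1)) (a n - a (n - 1))
  simp only at hmono
  nlinarith [hmono, hcomm]
end

section
/- Let A, B be maximal monotone operators on a real Hilbert space X and let (y_n, a_n, x_n, b_n) be sequences generated by the Douglas–Rachford method with stepsize λ = 1 from initial points x₀, b₀ ∈ X. Then for every p = (z, w) ∈ S_e(A,B) and every n ≥ 1, with p_n = (x_n, b_n) ∈ X × X equipped with the product inner product, one has ⟨p − p_n, p_n − p_{n−1}⟩ ≥ ⟨x_n − y_n, a_n + b_n⟩. -/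
open Filter Topology

/-- For every `p = (z,w) ∈ S_e(A,B)` and `n ≥ 1`, with `p_n = (x_n, b_n)` in the product
Hilbert space `X × X` (so `⟨(u,v),(u',v')⟩ = ⟨u,u'⟩ + ⟨v,v'⟩`), one has
`⟨p - p_n, p_n - p_{n-1}⟩ ≥ ⟨x_n - y_n, a_n + b_n⟩`. -/
theorem dr_inner_ineq {X : Type*} [NormedAddCommGroup X] [InnerProductSpace ℝ X]
    [CompleteSpace X] (A B : Set (X × X))
    (hA : IsMaxMonotone A) (hB : IsMaxMonotone B)
    (y a x b : ℕ → X) (hDR : IsDR A B 1 y a x b)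
    (z w : X) (hp : (z, w) ∈ Se A B) (n : ℕ) (hn : 1 ≤ n) :
    (inner ℝ (x n - y n) (a n + b n) : ℝ) ≤
      (inner ℝ (z - x n) (x n - x (n - 1)) : ℝ) +
        (inner ℝ (w - b n) (b n - b (n - 1)) : ℝ) := by
  obtain ⟨hyA, heq1, hxB, heq2⟩ := hDR n hn
  simp only [one_smul] at heq1 heq2
  have hy : y n = b n + x n - b (n - 1) := by rw [eq_sub_iff_add_eq]; exact heq2.symm
  have hx1 : x (n - 1) = a n + y n + b (n - 1) := by rw [heq1]; abel
  have hx : x n - x (n - 1) = -(a n + b n) := by rw [hx1, hy]; abel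
  have hbn : b n - b (n - 1) = y n - x n := by
    rw [sub_eq_sub_iff_add_eq_add]; exact heq2
  have h1 : (0:ℝ) ≤ inner ℝ (y n - z) (a n - -w) := hA.1 (y n, a n) hyA (z, -w) hp.2
  have h2 : (0:ℝ) ≤ inner ℝ (x n - z) (b n - w) := hB.1 (x n, b n) hxB (z, w) hp.1
  rw [hx, hbn]
  simp only [inner_sub_left, inner_sub_right, inner_add_left, inner_add_right,
    inner_neg_left, inner_neg_right, sub_neg_eq_add] at h1 h2 ⊢
  linarith [real_inner_comm w (y n), real_inner_comm w (x n),
    real_inner_comm (b n) (y n), real_inner_comm (b n) (x n)]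
end

section
/- Let A, B be maximal monotone operators on a real Hilbert space X. Then the extended solution set S_e(A,B) is a closed and convex subset of the product Hilbert space X × X. -/
open Filter Topology

section Aux

variable {X : Type*} [NormedAddCommGroup X] [InnerProductSpace ℝ X]

lemma mem_of_forall_inner {T : Set (X × X)} (hT : IsMaxMonotone T) (p : X × X)
    (h : ∀ q ∈ T, (0:ℝ) ≤ inner ℝ (p.1 - q.1) (p.2 - q.2)) : p ∈ T := by
  have hmono : IsMonotoneOp (insert p T) := by
    rintro a (rfl | ha) b (rfl | hb)
    · simp
    · exact h b hb
    · have := h a ha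
      rwa [← neg_sub b.1 a.1, ← neg_sub b.2 a.2, inner_neg_neg]
    · exact hT.1 a ha b hb
  have := hT.2 _ hmono (Set.subset_insert p T)
  rw [← this]; exact Set.mem_insert p T

lemma maxMonotone_eq {T : Set (X × X)} (hT : IsMaxMonotone T) :
    T = {p : X × X | ∀ q ∈ T, (0:ℝ) ≤ inner ℝ (p.1 - q.1) (p.2 - q.2)} := by
  ext p
  exact ⟨fun hp q hq => hT.1 p hp q hq, fun h => mem_of_forall_inner hT p h⟩

lemma maxMonotone_closed {T : Set (X × X)} (hT : IsMaxMonotone T) : IsClosed T := by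
  rw [maxMonotone_eq hT]
  have : {p : X × X | ∀ q ∈ T, (0:ℝ) ≤ inner ℝ (p.1 - q.1) (p.2 - q.2)}
      = ⋂ q ∈ T, {p : X × X | (0:ℝ) ≤ inner ℝ (p.1 - q.1) (p.2 - q.2)} := by
    ext p; simp
  rw [this]
  refine isClosed_biInter fun q hq => isClosed_le continuous_const ?_
  exact Continuous.inner (by fun_prop) (by fun_prop)

lemma convex_aux {T : Set (X × X)} (hT : IsMaxMonotone T) {u v u' v' : X}
    (hu : (u, v) ∈ T) (hu' : (u', v') ∈ T) (hzw : (inner ℝ (u - u') (v - v') : ℝ) = 0)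
    {t s : ℝ} (ht : 0 ≤ t) (hs : 0 ≤ s) (hts : t + s = 1) :
    (t • u + s • u', t • v + s • v') ∈ T := by
  apply mem_of_forall_inner hT
  rintro ⟨x, b⟩ hq
  have h1 : (0:ℝ) ≤ inner ℝ (u - x) (v - b) := hT.1 _ hu _ hq
  have h2 : (0:ℝ) ≤ inner ℝ (u' - x) (v' - b) := hT.1 _ hu' _ hq
  have hcross : (inner ℝ (u - x) (v' - b) : ℝ) + inner ℝ (u' - x) (v - b)
      = inner ℝ (u - x) (v - b) + inner ℝ (u' - x) (v' - b) := by
    have : (inner ℝ ((u - x) - (u' - x)) ((v - b) - (v' - b)) : ℝ) = 0 := by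
      rw [show (u - x) - (u' - x) = u - u' by abel, show (v - b) - (v' - b) = v - v' by abel]
      exact hzw
    simp only [inner_sub_left, inner_sub_right] at this ⊢
    linarith
  have e2 : (t • u + s • u' - x : X) = t • (u - x) + s • (u' - x) := by
    rw [show t • (u - x) + s • (u' - x) = t • u + s • u' - (t + s) • x from by module,
      hts, one_smul]
  have e3 : (t • v + s • v' - b : X) = t • (v - b) + s • (v' - b) := by
    rw [show t • (v - b) + s • (v' - b) = t • v + s • v' - (t + s) • b from by module,
      hts, one_smul]
  simp only [e2, e3]
  rw [inner_add_left, inner_add_right, inner_add_right, real_inner_smul_left,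
    real_inner_smul_left, real_inner_smul_left, real_inner_smul_left,
    real_inner_smul_right, real_inner_smul_right, real_inner_smul_right,
    real_inner_smul_right]
  obtain rfl : s = 1 - t := by linarith
  nlinarith [mul_nonneg ht h1, mul_nonneg hs h2, hcross, mul_nonneg ht hs]

lemma Se_convex {A B : Set (X × X)} (hA : IsMaxMonotone A) (hB : IsMaxMonotone B) :
    Convex ℝ (Se A B) := by
  rintro p ⟨hpB, hpA⟩ q ⟨hqB, hqA⟩ t s ht hs hts
  have hge : (0:ℝ) ≤ inner ℝ (p.1 - q.1) (p.2 - q.2) := hB.1 _ hpB _ hqB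
  have hle : (0:ℝ) ≤ inner ℝ (p.1 - q.1) (-p.2 - -q.2) := hA.1 _ hpA _ hqA
  have hzw : (inner ℝ (p.1 - q.1) (p.2 - q.2) : ℝ) = 0 := by
    rw [show -p.2 - -q.2 = -(p.2 - q.2) by abel, inner_neg_right] at hle
    linarith
  have hzw' : (inner ℝ (p.1 - q.1) (-p.2 - -q.2) : ℝ) = 0 := by
    rw [show -p.2 - -q.2 = -(p.2 - q.2) by abel, inner_neg_right, hzw, neg_zero]
  constructor
  · exact convex_aux hB hpB hqB hzw ht hs hts
  · have h := convex_aux hA hpA hqA hzw' ht hs hts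
    have hpt : ((t • p + s • q).1, -(t • p + s • q).2)
        = (t • p.1 + s • q.1, t • -p.2 + s • -q.2) := by
      simp only [Prod.fst_add, Prod.snd_add, Prod.smul_fst, Prod.smul_snd, smul_neg,
        Prod.mk.injEq]
      exact ⟨trivial, by abel⟩
    show ((t • p + s • q).1, -(t • p + s • q).2) ∈ A
    rw [hpt]; exact h

lemma Se_closed {A B : Set (X × X)} (hA : IsMaxMonotone A) (hB : IsMaxMonotone B) :
    IsClosed (Se A B) := by
  have : Se A B = B ∩ (fun p : X × X => (p.1, -p.2)) ⁻¹' A := by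
    ext p; simp [Se, Set.mem_inter_iff]
  rw [this]
  exact (maxMonotone_closed hB).inter ((maxMonotone_closed hA).preimage
    (continuous_fst.prodMk continuous_snd.neg))

end Aux

/-- For maximal monotone `A`, `B`, the extended solution set `S_e(A,B)` is a closed and
convex subset of the product Hilbert space `X × X` (realized as `WithLp 2 (X × X)`). -/
theorem Se_isClosed_convex {X : Type*} [NormedAddCommGroup X] [InnerProductSpace ℝ X]
    [CompleteSpace X] (A B : Set (X × X))
    (hA : IsMaxMonotone A) (hB : IsMaxMonotone B) :
    IsClosed ((WithLp.equiv 2 (X × X)).symm '' Se A B) ∧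
    Convex ℝ ((WithLp.equiv 2 (X × X)).symm '' Se A B) := by
  set e := WithLp.prodContinuousLinearEquiv 2 ℝ X X with he
  have him : (WithLp.equiv 2 (X × X)).symm '' Se A B = ⇑e ⁻¹' Se A B := by
    rw [Equiv.image_eq_preimage_symm, Equiv.symm_symm]
    rfl
  rw [him]
  exact ⟨(Se_closed hA hB).preimage e.continuous,
    (Se_convex hA hB).linear_preimage (e : WithLp 2 (X × X) →ₗ[ℝ] X × X)⟩
end
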